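/- Let H be a dual quasi-bialgebra. Then the category of left-left Yetter-Drinfeld modules over H is isomorphic to the right weak center of the monoidal category of left H-comodules; for an object (M, c_{-,M}) of the weak center, the corresponding action is h·m = (id⊗ε)c_{H,M}(h⊗m), and conversely c_{N,M}(n⊗m) = n₍₋₁₎·m ⊗ n₍₀₎. -/

import Mathlib

open TensorProduct

noncomputable section

namespace DQH

/-- Iterated comultiplication, 3 legs, right-nested. -/
def cD3 {k H : Type} [Field k] [AddCommGroup H] [Module k H]
    (Δ : H →ₗ[k] H ⊗[k] H) (a : H) : H ⊗[k] (H ⊗[k] H) :=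
  (TensorProduct.map LinearMap.id Δ) (Δ a)

/-- Iterated comultiplication, 4 legs, right-nested. -/
def cD4 {k H : Type} [Field k] [AddCommGroup H] [Module k H]
    (Δ : H →ₗ[k] H ⊗[k] H) (a : H) : H ⊗[k] (H ⊗[k] (H ⊗[k] H)) :=
  (TensorProduct.map LinearMap.id (TensorProduct.map LinearMap.id Δ)) (cD3 Δ a)

/-- Iterated comultiplication, 5 legs, right-nested. -/
def cD5 {k H : Type} [Field k] [AddCommGroup H] [Module k H]
    (Δ : H →ₗ[k] H ⊗[k] H) (a : H) : H ⊗[k] (H ⊗[k] (H ⊗[k] (H ⊗[k] H))) :=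
  (TensorProduct.map LinearMap.id (TensorProduct.map LinearMap.id
    (TensorProduct.map LinearMap.id Δ))) (cD4 Δ a)

/-- Iterated comultiplication, 6 legs, right-nested. -/
def cD6 {k H : Type} [Field k] [AddCommGroup H] [Module k H]
    (Δ : H →ₗ[k] H ⊗[k] H) (a : H) : H ⊗[k] (H ⊗[k] (H ⊗[k] (H ⊗[k] (H ⊗[k] H)))) :=
  (TensorProduct.map LinearMap.id (TensorProduct.map LinearMap.id
    (TensorProduct.map LinearMap.id (TensorProduct.map LinearMap.id Δ)))) (cD5 Δ a)

/-- A dual quasi-bialgebra over a field `k`: a coassociative coalgebra `(H, comul, counit)`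
together with coalgebra morphisms `mul` (multiplication) and a unit `one`, and a
convolution-invertible reassociator `sigma ∈ (H⊗H⊗H)^*` (with inverse `sigmaInv`),
satisfying the dual quasi-bialgebra axioms.  Sweedler sums are expressed by quantifying over
finite presentations of the (iterated) comultiplications as sums of pure tensors. -/
structure DualQuasiBialgebra (k H : Type) [Field k] [AddCommGroup H] [Module k H] where
  comul : H →ₗ[k] H ⊗[k] H
  counit : H →ₗ[k] k
  coassoc : ∀ a : H,
    (TensorProduct.assoc k H H H) ((TensorProduct.map comul LinearMap.id) (comul a)) =
      (TensorProduct.map LinearMap.id comul) (comul a)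
  counit_left : ∀ a : H,
    (TensorProduct.lid k H) ((TensorProduct.map counit LinearMap.id) (comul a)) = a
  counit_right : ∀ a : H,
    (TensorProduct.rid k H) ((TensorProduct.map LinearMap.id counit) (comul a)) = a
  mul : H →ₗ[k] H →ₗ[k] H
  one : H
  one_mul : ∀ a : H, mul one a = a
  mul_one : ∀ a : H, mul a one = a
  counit_one : counit one = 1
  comul_one : comul one = one ⊗ₜ[k] one
  counit_mul : ∀ a b : H, counit (mul a b) = counit a * counit b
  comul_mul : ∀ (a b : H) (sa sb : Finset ℕ) (a1 a2 b1 b2 : ℕ → H),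
    comul a = ∑ i ∈ sa, a1 i ⊗ₜ[k] a2 i →
    comul b = ∑ j ∈ sb, b1 j ⊗ₜ[k] b2 j →
    comul (mul a b) = ∑ i ∈ sa, ∑ j ∈ sb, mul (a1 i) (b1 j) ⊗ₜ[k] mul (a2 i) (b2 j)
  sigma : H →ₗ[k] H →ₗ[k] H →ₗ[k] k
  sigmaInv : H →ₗ[k] H →ₗ[k] H →ₗ[k] k
  sigma_sigmaInv : ∀ (a b c : H) (sa sb sc : Finset ℕ) (a1 a2 b1 b2 c1 c2 : ℕ → H),
    comul a = ∑ i ∈ sa, a1 i ⊗ₜ[k] a2 i →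
    comul b = ∑ j ∈ sb, b1 j ⊗ₜ[k] b2 j →
    comul c = ∑ l ∈ sc, c1 l ⊗ₜ[k] c2 l →
    ∑ i ∈ sa, ∑ j ∈ sb, ∑ l ∈ sc,
        sigma (a1 i) (b1 j) (c1 l) * sigmaInv (a2 i) (b2 j) (c2 l) =
      counit a * counit b * counit c
  sigmaInv_sigma : ∀ (a b c : H) (sa sb sc : Finset ℕ) (a1 a2 b1 b2 c1 c2 : ℕ → H),
    comul a = ∑ i ∈ sa, a1 i ⊗ₜ[k] a2 i →
    comul b = ∑ j ∈ sb, b1 j ⊗ₜ[k] b2 j →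
    comul c = ∑ l ∈ sc, c1 l ⊗ₜ[k] c2 l →
    ∑ i ∈ sa, ∑ j ∈ sb, ∑ l ∈ sc,
        sigmaInv (a1 i) (b1 j) (c1 l) * sigma (a2 i) (b2 j) (c2 l) =
      counit a * counit b * counit c
  -- (1a) : a₁(b₁c₁)σ(a₂,b₂,c₂) = σ(a₁,b₁,c₁)(a₂b₂)c₂
  quasi_assoc : ∀ (a b c : H) (sa sb sc : Finset ℕ) (a1 a2 b1 b2 c1 c2 : ℕ → H),
    comul a = ∑ i ∈ sa, a1 i ⊗ₜ[k] a2 i →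
    comul b = ∑ j ∈ sb, b1 j ⊗ₜ[k] b2 j →
    comul c = ∑ l ∈ sc, c1 l ⊗ₜ[k] c2 l →
    ∑ i ∈ sa, ∑ j ∈ sb, ∑ l ∈ sc,
        sigma (a2 i) (b2 j) (c2 l) • mul (a1 i) (mul (b1 j) (c1 l)) =
      ∑ i ∈ sa, ∑ j ∈ sb, ∑ l ∈ sc,
        sigma (a1 i) (b1 j) (c1 l) • mul (mul (a2 i) (b2 j)) (c2 l)
  -- (1c) : σ(a₁,b₁,c₁d₁)σ(a₂b₂,c₂,d₂) = σ(b₁,c₁,d₁)σ(a₁,b₂c₂,d₂)σ(a₂,b₃,c₃)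
  pentagon : ∀ (a b c d : H) (sa sb sc sd sb3 sc3 : Finset ℕ)
      (a1 a2 b1 b2 c1 c2 d1 d2 b1' b2' b3' c1' c2' c3' : ℕ → H),
    comul a = ∑ i ∈ sa, a1 i ⊗ₜ[k] a2 i →
    comul b = ∑ j ∈ sb, b1 j ⊗ₜ[k] b2 j →
    comul c = ∑ l ∈ sc, c1 l ⊗ₜ[k] c2 l →
    comul d = ∑ r ∈ sd, d1 r ⊗ₜ[k] d2 r →
    cD3 comul b = ∑ j ∈ sb3, b1' j ⊗ₜ[k] (b2' j ⊗ₜ[k] b3' j) →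
    cD3 comul c = ∑ l ∈ sc3, c1' l ⊗ₜ[k] (c2' l ⊗ₜ[k] c3' l) →
    ∑ i ∈ sa, ∑ j ∈ sb, ∑ l ∈ sc, ∑ r ∈ sd,
        sigma (a1 i) (b1 j) (mul (c1 l) (d1 r)) * sigma (mul (a2 i) (b2 j)) (c2 l) (d2 r) =
      ∑ i ∈ sa, ∑ j ∈ sb3, ∑ l ∈ sc3, ∑ r ∈ sd,
        sigma (b1' j) (c1' l) (d1 r) * sigma (a1 i) (mul (b2' j) (c2' l)) (d2 r) *
          sigma (a2 i) (b3' j) (c3' l)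
  -- (1d) : σ(a,1,b) = ε(a)ε(b)
  sigma_one_mid : ∀ a b : H, sigma a one b = counit a * counit b

/-- A dual quasi-Hopf algebra: a dual quasi-bialgebra together with a coalgebra
anti-morphism `antipode` and functionals `alpha, beta ∈ H^*` satisfying the antipode axioms. -/
structure DualQuasiHopfAlgebra (k H : Type) [Field k] [AddCommGroup H] [Module k H]
    extends DualQuasiBialgebra k H where
  antipode : H →ₗ[k] H
  comul_antipode : ∀ (a : H) (sa : Finset ℕ) (a1 a2 : ℕ → H),
    comul a = ∑ i ∈ sa, a1 i ⊗ₜ[k] a2 i →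
    comul (antipode a) = ∑ i ∈ sa, antipode (a2 i) ⊗ₜ[k] antipode (a1 i)
  counit_antipode : ∀ a : H, counit (antipode a) = counit a
  alpha : H →ₗ[k] k
  beta : H →ₗ[k] k
  -- (1e) : s(h₁)α(h₂)h₃ = α(h)1
  antipode_alpha : ∀ (a : H) (sa : Finset ℕ) (a1 a2 a3 : ℕ → H),
    cD3 comul a = ∑ i ∈ sa, a1 i ⊗ₜ[k] (a2 i ⊗ₜ[k] a3 i) →
    ∑ i ∈ sa, alpha (a2 i) • mul (antipode (a1 i)) (a3 i) = alpha a • one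
  -- (1e) : h₁β(h₂)s(h₃) = β(h)1
  antipode_beta : ∀ (a : H) (sa : Finset ℕ) (a1 a2 a3 : ℕ → H),
    cD3 comul a = ∑ i ∈ sa, a1 i ⊗ₜ[k] (a2 i ⊗ₜ[k] a3 i) →
    ∑ i ∈ sa, beta (a2 i) • mul (a1 i) (antipode (a3 i)) = beta a • one
  -- (1f) : σ(h₁β(h₂), s(h₃), α(h₄)h₅) = ε(h)
  sigma_antipode : ∀ (a : H) (sa : Finset ℕ) (a1 a2 a3 a4 a5 : ℕ → H),
    cD5 comul a = ∑ i ∈ sa, a1 i ⊗ₜ[k] (a2 i ⊗ₜ[k] (a3 i ⊗ₜ[k] (a4 i ⊗ₜ[k] a5 i))) →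
    ∑ i ∈ sa, beta (a2 i) * alpha (a4 i) * sigma (a1 i) (antipode (a3 i)) (a5 i) = counit a
  -- (1f) : σ⁻¹(s(h₁), α(h₂)h₃, β(h₄)s(h₅)) = ε(h)
  sigmaInv_antipode : ∀ (a : H) (sa : Finset ℕ) (a1 a2 a3 a4 a5 : ℕ → H),
    cD5 comul a = ∑ i ∈ sa, a1 i ⊗ₜ[k] (a2 i ⊗ₜ[k] (a3 i ⊗ₜ[k] (a4 i ⊗ₜ[k] a5 i))) →
    ∑ i ∈ sa, alpha (a2 i) * beta (a4 i) *
      sigmaInv (antipode (a1 i)) (a3 i) (antipode (a5 i)) = counit a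

variable {k H : Type} [Field k] [AddCommGroup H] [Module k H]

/-- `(M, coact)` is a left `H`-comodule. -/
def IsComodule (B : DualQuasiBialgebra k H) {M : Type} [AddCommGroup M] [Module k M]
    (coact : M →ₗ[k] H ⊗[k] M) : Prop :=
  (∀ m : M, (TensorProduct.assoc k H H M)
      ((TensorProduct.map B.comul LinearMap.id) (coact m)) =
      (TensorProduct.map LinearMap.id coact) (coact m)) ∧
  (∀ m : M, (TensorProduct.lid k M)
      ((TensorProduct.map B.counit LinearMap.id) (coact m)) = m)

/-- `cweight coact φ m = φ(m₍₋₁₎) • m₍₀₎`. -/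
def cweight {M : Type} [AddCommGroup M] [Module k M]
    (coact : M →ₗ[k] H ⊗[k] M) (φ : H →ₗ[k] k) : M →ₗ[k] M :=
  (TensorProduct.lid k M).toLinearMap ∘ₗ (TensorProduct.map φ LinearMap.id) ∘ₗ coact

/-- Diagonal coaction on the tensor product of two left comodules:
`(m ⊗ n) ↦ m₍₋₁₎n₍₋₁₎ ⊗ (m₍₀₎ ⊗ n₍₀₎)`. -/
def coactTensor (B : DualQuasiBialgebra k H) {M N : Type}
    [AddCommGroup M] [Module k M] [AddCommGroup N] [Module k N]
    (cM : M →ₗ[k] H ⊗[k] M) (cN : N →ₗ[k] H ⊗[k] N) :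
    (M ⊗[k] N) →ₗ[k] H ⊗[k] (M ⊗[k] N) :=
  (TensorProduct.map (TensorProduct.lift B.mul) LinearMap.id) ∘ₗ
    (TensorProduct.tensorTensorTensorComm k H M H N).toLinearMap ∘ₗ
      (TensorProduct.map cM cN)

/-- `sigma` as a linear functional on `(H ⊗ H) ⊗ H`. -/
def sigma3 (B : DualQuasiBialgebra k H) : (H ⊗[k] H) ⊗[k] H →ₗ[k] k :=
  TensorProduct.lift (TensorProduct.lift B.sigma)

/-- `sigmaInv` as a linear functional on `(H ⊗ H) ⊗ H`. -/
def sigmaInv3 (B : DualQuasiBialgebra k H) : (H ⊗[k] H) ⊗[k] H →ₗ[k] k :=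
  TensorProduct.lift (TensorProduct.lift B.sigmaInv)

/-- `sigma` as a linear functional on `H ⊗ (H ⊗ H)`. -/
def sigma3R (B : DualQuasiBialgebra k H) : H ⊗[k] (H ⊗[k] H) →ₗ[k] k :=
  sigma3 B ∘ₗ (TensorProduct.assoc k H H H).symm.toLinearMap

/-- The associativity constraint of the monoidal category of left `H`-comodules:
`a((m⊗n)⊗p) = σ⁻¹(m₍₋₁₎,n₍₋₁₎,p₍₋₁₎) m₍₀₎ ⊗ (n₍₀₎ ⊗ p₍₀₎)`. -/
def assocMap (B : DualQuasiBialgebra k H) {M N P : Type}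
    [AddCommGroup M] [Module k M] [AddCommGroup N] [Module k N] [AddCommGroup P] [Module k P]
    (cM : M →ₗ[k] H ⊗[k] M) (cN : N →ₗ[k] H ⊗[k] N) (cP : P →ₗ[k] H ⊗[k] P) :
    (M ⊗[k] N) ⊗[k] P →ₗ[k] M ⊗[k] (N ⊗[k] P) :=
  (TensorProduct.lid k (M ⊗[k] (N ⊗[k] P))).toLinearMap ∘ₗ
    (TensorProduct.map (sigmaInv3 B) (TensorProduct.assoc k M N P).toLinearMap) ∘ₗ
      (TensorProduct.tensorTensorTensorComm k (H ⊗[k] H) (M ⊗[k] N) H P).toLinearMap ∘ₗ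
        (TensorProduct.map (TensorProduct.tensorTensorTensorComm k H M H N).toLinearMap
          LinearMap.id) ∘ₗ
          (TensorProduct.map (TensorProduct.map cM cN) cP)

/-- The inverse associativity constraint of the monoidal category of left `H`-comodules:
`a⁻¹(m⊗(n⊗p)) = σ(m₍₋₁₎,n₍₋₁₎,p₍₋₁₎) (m₍₀₎ ⊗ n₍₀₎) ⊗ p₍₀₎`. -/
def assocInvMap (B : DualQuasiBialgebra k H) {M N P : Type}
    [AddCommGroup M] [Module k M] [AddCommGroup N] [Module k N] [AddCommGroup P] [Module k P]
    (cM : M →ₗ[k] H ⊗[k] M) (cN : N →ₗ[k] H ⊗[k] N) (cP : P →ₗ[k] H ⊗[k] P) :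
    M ⊗[k] (N ⊗[k] P) →ₗ[k] (M ⊗[k] N) ⊗[k] P :=
  (TensorProduct.lid k ((M ⊗[k] N) ⊗[k] P)).toLinearMap ∘ₗ
    (TensorProduct.map (sigma3R B) (TensorProduct.assoc k M N P).symm.toLinearMap) ∘ₗ
      (TensorProduct.tensorTensorTensorComm k H M (H ⊗[k] H) (N ⊗[k] P)).toLinearMap ∘ₗ
        (TensorProduct.map LinearMap.id
          (TensorProduct.tensorTensorTensorComm k H N H P).toLinearMap) ∘ₗ
          (TensorProduct.map cM (TensorProduct.map cN cP))

/-- The pre-braiding of the category of left-left Yetter-Drinfeld modules: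
`c_{N,M}(n ⊗ m) = n₍₋₁₎ · m ⊗ n₍₀₎`. -/
def ydBraiding {M N : Type}
    [AddCommGroup M] [Module k M] [AddCommGroup N] [Module k N]
    (actM : H →ₗ[k] M →ₗ[k] M) (cN : N →ₗ[k] H ⊗[k] N) :
    N ⊗[k] M →ₗ[k] M ⊗[k] N :=
  (TensorProduct.map (TensorProduct.lift actM) LinearMap.id) ∘ₗ
    (TensorProduct.assoc k H M N).symm.toLinearMap ∘ₗ
      (TensorProduct.map LinearMap.id (TensorProduct.comm k N M).toLinearMap) ∘ₗ
        (TensorProduct.assoc k H N M).toLinearMap ∘ₗ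
          (TensorProduct.map cN LinearMap.id)

/-- `(M, coact, act)` is a left-left Yetter-Drinfeld module over the dual quasi-bialgebra `B`:
`M` is a left `H`-comodule, `act` is a (not necessarily associative) left `H`-action with
`1 · m = m`, satisfying the quasi-associativity axiom (YD1)
`σ(h₁,g₁,m₍₋₁₎)σ((h₂g₂·m₍₀₎)₍₋₁₎,h₃,g₃)(h₂g₂·m₍₀₎)₍₀₎ = σ(h₁,(g₁·m)₍₋₁₎,g₂) h₂·(g₁·m)₍₀₎`
and the compatibility axiom (YD3)
`h₁m₍₋₁₎ ⊗ h₂·m₍₀₎ = (h₁·m)₍₋₁₎h₂ ⊗ (h₁·m)₍₀₎`. -/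
structure IsYetterDrinfeld (B : DualQuasiBialgebra k H) {M : Type}
    [AddCommGroup M] [Module k M]
    (coact : M →ₗ[k] H ⊗[k] M) (act : H →ₗ[k] M →ₗ[k] M) : Prop where
  comodule : IsComodule B coact
  one_act : ∀ m : M, act B.one m = m
  yd1 : ∀ (h g : H) (m : M) (sh3 sg3 sh sg sm : Finset ℕ)
      (h1 h2 h3 g1 g2 g3 h1' h2' g1' g2' m1 : ℕ → H) (m0 : ℕ → M),
    cD3 B.comul h = ∑ i ∈ sh3, h1 i ⊗ₜ[k] (h2 i ⊗ₜ[k] h3 i) →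
    cD3 B.comul g = ∑ j ∈ sg3, g1 j ⊗ₜ[k] (g2 j ⊗ₜ[k] g3 j) →
    B.comul h = ∑ i ∈ sh, h1' i ⊗ₜ[k] h2' i →
    B.comul g = ∑ j ∈ sg, g1' j ⊗ₜ[k] g2' j →
    coact m = ∑ r ∈ sm, m1 r ⊗ₜ[k] m0 r →
    ∑ i ∈ sh3, ∑ j ∈ sg3, ∑ r ∈ sm,
        B.sigma (h1 i) (g1 j) (m1 r) •
          cweight coact ((B.sigma.flip (h3 i)).flip (g3 j))
            (act (B.mul (h2 i) (g2 j)) (m0 r)) =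
      ∑ i ∈ sh, ∑ j ∈ sg,
        act (h2' i) (cweight coact ((B.sigma (h1' i)).flip (g2' j)) (act (g1' j) m))
  yd3 : ∀ (h : H) (m : M) (sh sm : Finset ℕ) (h1 h2 m1 : ℕ → H) (m0 : ℕ → M),
    B.comul h = ∑ i ∈ sh, h1 i ⊗ₜ[k] h2 i →
    coact m = ∑ j ∈ sm, m1 j ⊗ₜ[k] m0 j →
    ∑ i ∈ sh, ∑ j ∈ sm, B.mul (h1 i) (m1 j) ⊗ₜ[k] act (h2 i) (m0 j) =
      ∑ i ∈ sh, (TensorProduct.map (B.mul.flip (h2 i)) LinearMap.id)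
        (coact (act (h1 i) m))

end DQH

namespace DQH

variable {k H : Type} [Field k] [AddCommGroup H] [Module k H]

/-- An object of the right weak center `W_r(ᴴM)` of the monoidal category of left
`H`-comodules, with underlying comodule `(M, cM)`: a natural family of `H`-colinear maps
`t_{N} : N ⊗ M → M ⊗ N` (for all left `H`-comodules `N`) with `t_I = id`, satisfying the
weak-center hexagon condition (1.13) with respect to the associativity constraint of `ᴴM`. -/
structure RightCenterObj (B : DualQuasiBialgebra k H) (M : Type)
    [AddCommGroup M] [Module k M] (cM : M →ₗ[k] H ⊗[k] M) : Type 1 where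
  t : ∀ (N : Type) [AddCommGroup N] [Module k N]
    (cN : N →ₗ[k] H ⊗[k] N), IsComodule B cN → (N ⊗[k] M →ₗ[k] M ⊗[k] N)
  natural : ∀ (N N' : Type) [AddCommGroup N] [Module k N] [AddCommGroup N'] [Module k N']
    (cN : N →ₗ[k] H ⊗[k] N) (cN' : N' →ₗ[k] H ⊗[k] N')
    (hN : IsComodule B cN) (hN' : IsComodule B cN') (φ : N →ₗ[k] N'),
    cN' ∘ₗ φ = (TensorProduct.map LinearMap.id φ) ∘ₗ cN →
    (t N' cN' hN') ∘ₗ (TensorProduct.map φ LinearMap.id) =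
      (TensorProduct.map LinearMap.id φ) ∘ₗ (t N cN hN)
  unit : ∀ (htriv : IsComodule B (TensorProduct.mk k H k B.one)) (m : M),
    t k (TensorProduct.mk k H k B.one) htriv ((1 : k) ⊗ₜ[k] m) = m ⊗ₜ[k] (1 : k)
  colinear : ∀ (N : Type) [AddCommGroup N] [Module k N]
    (cN : N →ₗ[k] H ⊗[k] N) (hN : IsComodule B cN),
    (coactTensor B cM cN) ∘ₗ (t N cN hN) =
      (TensorProduct.map LinearMap.id (t N cN hN)) ∘ₗ (coactTensor B cN cM)
  hexagon : ∀ (X Y : Type) [AddCommGroup X] [Module k X] [AddCommGroup Y] [Module k Y]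
    (cX : X →ₗ[k] H ⊗[k] X) (cY : Y →ₗ[k] H ⊗[k] Y)
    (hX : IsComodule B cX) (hY : IsComodule B cY)
    (hXY : IsComodule B (coactTensor B cX cY)),
    (assocInvMap B cM cX cY) ∘ₗ (t (X ⊗[k] Y) (coactTensor B cX cY) hXY) ∘ₗ
        (assocInvMap B cX cY cM) =
      (TensorProduct.map (t X cX hX) LinearMap.id) ∘ₗ (assocInvMap B cX cM cY) ∘ₗ
        (TensorProduct.map LinearMap.id (t Y cY hY))

end DQH

namespace DQH
variable {k H : Type} [Field k] [AddCommGroup H] [Module k H]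

theorem exists_pres {A B : Type} [AddCommGroup A] [Module k A] [AddCommGroup B] [Module k B]
    (x : A ⊗[k] B) : ∃ (s : Finset ℕ) (f : ℕ → A) (g : ℕ → B), x = ∑ i ∈ s, f i ⊗ₜ[k] g i := by
  induction x using TensorProduct.induction_on with
  | zero => exact ⟨∅, 0, 0, by simp⟩
  | tmul a b => exact ⟨{0}, fun _ => a, fun _ => b, by simp⟩
  | add x y hx hy =>
    obtain ⟨s, f, g, rfl⟩ := hx
    obtain ⟨t, f', g', rfl⟩ := hy
    refine ⟨(s.image (2 * ·)) ∪ (t.image (2 * · + 1)),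
      fun n => if n % 2 = 0 then f (n / 2) else f' (n / 2),
      fun n => if n % 2 = 0 then g (n / 2) else g' (n / 2), ?_⟩
    rw [Finset.sum_union, Finset.sum_image, Finset.sum_image]
    · simp only [Nat.mul_div_cancel_left, Nat.mul_mod_right, if_pos rfl]
      congr 1
      · exact Finset.sum_congr rfl fun x _ => by norm_num
      · refine Finset.sum_congr rfl fun x _ => ?_
        have h1 : (2 * x + 1) % 2 = 1 := by omega
        have h2 : (2 * x + 1) / 2 = x := by omega
        rw [h1, h2]; simp
    · intro a _ b _ h; beta_reduce at h; omega
    · intro a _ b _ h; beta_reduce at h; omega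
    · rw [Finset.disjoint_left]; rintro a ha hb
      simp only [Finset.mem_image] at ha hb
      obtain ⟨u, _, rfl⟩ := ha; obtain ⟨v, _, h⟩ := hb; omega

theorem exists_pres3 {A B C : Type} [AddCommGroup A] [Module k A] [AddCommGroup B] [Module k B]
    [AddCommGroup C] [Module k C] (x : A ⊗[k] (B ⊗[k] C)) :
    ∃ (s : Finset ℕ) (f : ℕ → A) (g : ℕ → B) (h : ℕ → C),
      x = ∑ i ∈ s, f i ⊗ₜ[k] (g i ⊗ₜ[k] h i) := by
  obtain ⟨s, f, y, rfl⟩ := exists_pres x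
  have : ∀ i : ℕ, ∃ (t : Finset ℕ) (g : ℕ → B) (h : ℕ → C),
      y i = ∑ j ∈ t, g j ⊗ₜ[k] h j := fun i => exists_pres (y i)
  choose t g h hy using this
  refine ⟨s.biUnion (fun i => (t i).image (Nat.pair i)),
    fun n => f (Nat.unpair n).1, fun n => g (Nat.unpair n).1 (Nat.unpair n).2,
    fun n => h (Nat.unpair n).1 (Nat.unpair n).2, ?_⟩
  rw [Finset.sum_biUnion]
  · refine Finset.sum_congr rfl fun i hi => ?_
    rw [Finset.sum_image (by intro a _ b _ hab; simpa using congrArg (·.2) (congrArg Nat.unpair hab))]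
    simp only [Nat.unpair_pair]
    rw [hy i, TensorProduct.tmul_sum]
  · intro a _ b _ hab
    simp only [Function.onFun, Finset.disjoint_left, Finset.mem_image]
    rintro n ⟨u, _, rfl⟩ ⟨v, _, hv⟩
    exact hab (by simpa using congrArg (·.1) (congrArg Nat.unpair hv.symm))

variable {M N P : Type} [AddCommGroup M] [Module k M] [AddCommGroup N] [Module k N]
  [AddCommGroup P] [Module k P]

theorem cweight_eq {ι : Type} (cM : M →ₗ[k] H ⊗[k] M) (φ : H →ₗ[k] k) (m : M)
    (s : Finset ι) (m1 : ι → H) (m0 : ι → M) (hm : cM m = ∑ i ∈ s, m1 i ⊗ₜ[k] m0 i) :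
    cweight cM φ m = ∑ i ∈ s, φ (m1 i) • m0 i := by
  simp [cweight, hm, map_sum]

theorem coactTensor_eq {ι ι' : Type} (B : DualQuasiBialgebra k H)
    (cM : M →ₗ[k] H ⊗[k] M) (cN : N →ₗ[k] H ⊗[k] N) (m : M) (n : N)
    (sm : Finset ι) (sn : Finset ι') (m1 : ι → H) (m0 : ι → M) (n1 : ι' → H) (n0 : ι' → N)
    (hm : cM m = ∑ i ∈ sm, m1 i ⊗ₜ[k] m0 i) (hn : cN n = ∑ j ∈ sn, n1 j ⊗ₜ[k] n0 j) :
    coactTensor B cM cN (m ⊗ₜ[k] n) =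
      ∑ i ∈ sm, ∑ j ∈ sn, B.mul (m1 i) (n1 j) ⊗ₜ[k] (m0 i ⊗ₜ[k] n0 j) := by
  simp only [coactTensor, hm, hn, TensorProduct.sum_tmul, TensorProduct.tmul_sum, map_sum,
    LinearMap.coe_comp, LinearEquiv.coe_coe, Function.comp_apply, TensorProduct.map_tmul,
    TensorProduct.tensorTensorTensorComm_tmul, TensorProduct.lift.tmul, LinearMap.id_coe, id_eq]
  rw [Finset.sum_comm]

theorem ydBraiding_eq {ι : Type} (act : H →ₗ[k] M →ₗ[k] M) (cN : N →ₗ[k] H ⊗[k] N) (n : N) (m : M)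
    (sn : Finset ι) (n1 : ι → H) (n0 : ι → N)
    (hn : cN n = ∑ i ∈ sn, n1 i ⊗ₜ[k] n0 i) :
    ydBraiding act cN (n ⊗ₜ[k] m) = ∑ i ∈ sn, act (n1 i) m ⊗ₜ[k] n0 i := by
  simp [ydBraiding, hn, TensorProduct.sum_tmul, map_sum]

theorem assocInvMap_eq {ι ι' ι'' : Type} (B : DualQuasiBialgebra k H)
    (cM : M →ₗ[k] H ⊗[k] M) (cN : N →ₗ[k] H ⊗[k] N) (cP : P →ₗ[k] H ⊗[k] P)
    (m : M) (n : N) (p : P) (sm : Finset ι) (sn : Finset ι') (sp : Finset ι'')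
    (m1 : ι → H) (m0 : ι → M) (n1 : ι' → H) (n0 : ι' → N) (p1 : ι'' → H) (p0 : ι'' → P)
    (hm : cM m = ∑ i ∈ sm, m1 i ⊗ₜ[k] m0 i) (hn : cN n = ∑ j ∈ sn, n1 j ⊗ₜ[k] n0 j)
    (hp : cP p = ∑ l ∈ sp, p1 l ⊗ₜ[k] p0 l) :
    assocInvMap B cM cN cP (m ⊗ₜ[k] (n ⊗ₜ[k] p)) =
      ∑ i ∈ sm, ∑ j ∈ sn, ∑ l ∈ sp,
        B.sigma (m1 i) (n1 j) (p1 l) • ((m0 i ⊗ₜ[k] n0 j) ⊗ₜ[k] p0 l) := by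
  simp only [assocInvMap, sigma3R, sigma3, hm, hn, hp, TensorProduct.sum_tmul,
    TensorProduct.tmul_sum, map_sum, LinearMap.coe_comp, LinearEquiv.coe_coe,
    Function.comp_apply, TensorProduct.map_tmul, TensorProduct.tensorTensorTensorComm_tmul,
    TensorProduct.lift.tmul, LinearMap.id_coe, id_eq, TensorProduct.assoc_tmul,
    TensorProduct.assoc_symm_tmul, TensorProduct.lid_tmul]
  rw [Finset.sum_comm]
  refine Eq.trans (Finset.sum_congr rfl fun j _ => Finset.sum_comm ..) ?_
  rw [Finset.sum_comm]

end DQH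
namespace DQH
variable {k H : Type} [Field k] [AddCommGroup H] [Module k H]
variable {M N P X Y : Type} [AddCommGroup M] [Module k M] [AddCommGroup N] [Module k N]
  [AddCommGroup P] [Module k P] [AddCommGroup X] [Module k X] [AddCommGroup Y] [Module k Y]

/-- multiplication as a map on the tensor product -/
def mu2 (B : DualQuasiBialgebra k H) : H ⊗[k] H →ₗ[k] H := TensorProduct.lift B.mul

/-- `A1 ((a⊗b)⊗m) = act (ab) m` -/
def A1 (B : DualQuasiBialgebra k H) (act : H →ₗ[k] M →ₗ[k] M) :
    (H ⊗[k] H) ⊗[k] M →ₗ[k] M := TensorProduct.lift (act ∘ₗ mu2 B)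

@[simp] lemma A1_tmul (B : DualQuasiBialgebra k H) (act : H →ₗ[k] M →ₗ[k] M)
    (a b : H) (m : M) : A1 B act ((a ⊗ₜ[k] b) ⊗ₜ[k] m) = act (B.mul a b) m := by
  simp [A1, mu2]

/-- shuffle `(h⊗g)⊗(v1⊗v0) ↦ (v1⊗(h⊗g))⊗v0` -/
def eta : ((H ⊗[k] H) ⊗[k] (H ⊗[k] M)) ≃ₗ[k] ((H ⊗[k] (H ⊗[k] H)) ⊗[k] M) :=
  (TensorProduct.comm k (H ⊗[k] H) (H ⊗[k] M)) ≪≫ₗ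
    (TensorProduct.assoc k H M (H ⊗[k] H)) ≪≫ₗ
      (TensorProduct.congr (LinearEquiv.refl k H) (TensorProduct.comm k M (H ⊗[k] H))) ≪≫ₗ
        (TensorProduct.assoc k H (H ⊗[k] H) M).symm

@[simp] lemma eta_tmul (a b v1 : H) (v0 : M) :
    (eta (k := k)) ((a ⊗ₜ[k] b) ⊗ₜ[k] (v1 ⊗ₜ[k] v0)) = (v1 ⊗ₜ[k] (a ⊗ₜ[k] b)) ⊗ₜ[k] v0 := by
  simp [eta]

/-- `A2 ((a⊗b)⊗v) = σ(v₋₁, a, b) v₀ = cweight cM σ(-,a,b) v` -/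
def A2 (B : DualQuasiBialgebra k H) (cM : M →ₗ[k] H ⊗[k] M) :
    (H ⊗[k] H) ⊗[k] M →ₗ[k] M :=
  (TensorProduct.lid k M).toLinearMap ∘ₗ (TensorProduct.map (sigma3R B) LinearMap.id) ∘ₗ
    (eta).toLinearMap ∘ₗ (TensorProduct.map LinearMap.id cM)

lemma A2_eq {ι : Type} (B : DualQuasiBialgebra k H) (cM : M →ₗ[k] H ⊗[k] M)
    (a b : H) (v : M) (s : Finset ι) (v1 : ι → H) (v0 : ι → M)
    (hv : cM v = ∑ i ∈ s, v1 i ⊗ₜ[k] v0 i) :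
    A2 B cM ((a ⊗ₜ[k] b) ⊗ₜ[k] v) = ∑ i ∈ s, B.sigma (v1 i) a b • v0 i := by
  simp [A2, hv, TensorProduct.tmul_sum, map_sum, sigma3R, sigma3]

lemma A2_cweight (B : DualQuasiBialgebra k H) (cM : M →ₗ[k] H ⊗[k] M) (a b : H) (v : M) :
    A2 B cM ((a ⊗ₜ[k] b) ⊗ₜ[k] v) = cweight cM ((B.sigma.flip a).flip b) v := by
  obtain ⟨s, v1, v0, hv⟩ := exists_pres (cM v)
  rw [A2_eq B cM a b v s v1 v0 hv, cweight_eq cM _ v s v1 v0 hv]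
  simp

/-- `B2 ((a⊗b)⊗v) = σ(a, v₋₁, b) v₀` -/
def zeta2 : ((H ⊗[k] H) ⊗[k] (H ⊗[k] M)) ≃ₗ[k] ((H ⊗[k] (H ⊗[k] H)) ⊗[k] M) :=
  (TensorProduct.tensorTensorTensorComm k H H H M) ≪≫ₗ
    (TensorProduct.assoc k H H (H ⊗[k] M)) ≪≫ₗ
      (TensorProduct.congr (LinearEquiv.refl k H) (TensorProduct.assoc k H H M).symm) ≪≫ₗ
        (TensorProduct.assoc k H (H ⊗[k] H) M).symm

@[simp] lemma zeta2_tmul (a b v1 : H) (v0 : M) :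
    (zeta2 (k := k)) ((a ⊗ₜ[k] b) ⊗ₜ[k] (v1 ⊗ₜ[k] v0)) = (a ⊗ₜ[k] (v1 ⊗ₜ[k] b)) ⊗ₜ[k] v0 := by
  simp [zeta2]

def B2 (B : DualQuasiBialgebra k H) (cM : M →ₗ[k] H ⊗[k] M) :
    (H ⊗[k] H) ⊗[k] M →ₗ[k] M :=
  (TensorProduct.lid k M).toLinearMap ∘ₗ (TensorProduct.map (sigma3R B) LinearMap.id) ∘ₗ
    (zeta2).toLinearMap ∘ₗ (TensorProduct.map LinearMap.id cM)

lemma B2_eq {ι : Type} (B : DualQuasiBialgebra k H) (cM : M →ₗ[k] H ⊗[k] M)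
    (a b : H) (v : M) (s : Finset ι) (v1 : ι → H) (v0 : ι → M)
    (hv : cM v = ∑ i ∈ s, v1 i ⊗ₜ[k] v0 i) :
    B2 B cM ((a ⊗ₜ[k] b) ⊗ₜ[k] v) = ∑ i ∈ s, B.sigma a (v1 i) b • v0 i := by
  simp [B2, hv, TensorProduct.tmul_sum, map_sum, sigma3R, sigma3]

lemma B2_cweight (B : DualQuasiBialgebra k H) (cM : M →ₗ[k] H ⊗[k] M) (a b : H) (v : M) :
    B2 B cM ((a ⊗ₜ[k] b) ⊗ₜ[k] v) = cweight cM ((B.sigma a).flip b) v := by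
  obtain ⟨s, v1, v0, hv⟩ := exists_pres (cM v)
  rw [B2_eq B cM a b v s v1 v0 hv, cweight_eq cM _ v s v1 v0 hv]
  simp

end DQH
namespace DQH
variable {k H : Type} [Field k] [AddCommGroup H] [Module k H]
variable {M N P X Y : Type} [AddCommGroup M] [Module k M] [AddCommGroup N] [Module k N]
  [AddCommGroup P] [Module k P] [AddCommGroup X] [Module k X] [AddCommGroup Y] [Module k Y]

/-- rearrangement for `ΛL` -/
def lamLshuffle : ((H ⊗[k] (H ⊗[k] H)) ⊗[k] ((H ⊗[k] (H ⊗[k] H)) ⊗[k] (H ⊗[k] M)))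
    ≃ₗ[k] ((H ⊗[k] (H ⊗[k] H)) ⊗[k] ((H ⊗[k] H) ⊗[k] ((H ⊗[k] H) ⊗[k] M))) :=
  (TensorProduct.congr (LinearEquiv.refl k _)
      (TensorProduct.tensorTensorTensorComm k H (H ⊗[k] H) H M)) ≪≫ₗ
    (TensorProduct.tensorTensorTensorComm k H (H ⊗[k] H) (H ⊗[k] H)
      ((H ⊗[k] H) ⊗[k] M)) ≪≫ₗ
      (TensorProduct.congr (LinearEquiv.refl k _)
        ((TensorProduct.assoc k (H ⊗[k] H) (H ⊗[k] H) M).symm ≪≫ₗ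
          (TensorProduct.congr (TensorProduct.tensorTensorTensorComm k H H H H)
            (LinearEquiv.refl k M)) ≪≫ₗ
          (TensorProduct.congr
            (TensorProduct.comm k (H ⊗[k] H) (H ⊗[k] H)) (LinearEquiv.refl k M)) ≪≫ₗ
          (TensorProduct.assoc k (H ⊗[k] H) (H ⊗[k] H) M)))

@[simp] lemma lamLshuffle_tmul (h1 h2 h3 g1 g2 g3 m1 : H) (m0 : M) :
    (lamLshuffle (k := k))
        ((h1 ⊗ₜ[k] (h2 ⊗ₜ[k] h3)) ⊗ₜ[k] ((g1 ⊗ₜ[k] (g2 ⊗ₜ[k] g3)) ⊗ₜ[k] (m1 ⊗ₜ[k] m0))) =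
      (h1 ⊗ₜ[k] (g1 ⊗ₜ[k] m1)) ⊗ₜ[k]
        ((h3 ⊗ₜ[k] g3) ⊗ₜ[k] ((h2 ⊗ₜ[k] g2) ⊗ₜ[k] m0)) := by
  simp [lamLshuffle]

/-- yd1-LHS term as a linear map -/
def lamL (B : DualQuasiBialgebra k H) (cM : M →ₗ[k] H ⊗[k] M) (act : H →ₗ[k] M →ₗ[k] M) :
    (H ⊗[k] (H ⊗[k] H)) ⊗[k] ((H ⊗[k] (H ⊗[k] H)) ⊗[k] (H ⊗[k] M)) →ₗ[k] M :=
  (TensorProduct.lid k M).toLinearMap ∘ₗ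
    (TensorProduct.map (sigma3R B)
      (A2 B cM ∘ₗ TensorProduct.map LinearMap.id (A1 B act))) ∘ₗ
      (lamLshuffle).toLinearMap

lemma lamL_tmul (B : DualQuasiBialgebra k H) (cM : M →ₗ[k] H ⊗[k] M)
    (act : H →ₗ[k] M →ₗ[k] M) (h1 h2 h3 g1 g2 g3 m1 : H) (m0 : M) :
    lamL B cM act
        ((h1 ⊗ₜ[k] (h2 ⊗ₜ[k] h3)) ⊗ₜ[k] ((g1 ⊗ₜ[k] (g2 ⊗ₜ[k] g3)) ⊗ₜ[k] (m1 ⊗ₜ[k] m0))) =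
      B.sigma h1 g1 m1 •
        A2 B cM ((h3 ⊗ₜ[k] g3) ⊗ₜ[k] (act (B.mul h2 g2) m0)) := by
  simp [lamL, sigma3R, sigma3]

/-- yd1-RHS term as a linear map: `(h1⊗h2)⊗((g1⊗g2)⊗m) ↦ act h2 (B2 ((h1⊗g2) ⊗ act g1 m))` -/
def lamR (B : DualQuasiBialgebra k H) (cM : M →ₗ[k] H ⊗[k] M) (act : H →ₗ[k] M →ₗ[k] M) :
    (H ⊗[k] H) ⊗[k] ((H ⊗[k] H) ⊗[k] M) →ₗ[k] M :=
  TensorProduct.lift act ∘ₗ (TensorProduct.comm k M H).toLinearMap ∘ₗ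
    (TensorProduct.map (B2 B cM) LinearMap.id) ∘ₗ
    (TensorProduct.assoc k (H ⊗[k] H) M H).symm.toLinearMap ∘ₗ
    (TensorProduct.map LinearMap.id (TensorProduct.comm k H M).toLinearMap) ∘ₗ
    (TensorProduct.tensorTensorTensorComm k H H H M).toLinearMap ∘ₗ
    (TensorProduct.map LinearMap.id
      ((TensorProduct.map LinearMap.id (TensorProduct.lift act)) ∘ₗ
        (TensorProduct.assoc k H H M).toLinearMap ∘ₗ
        (TensorProduct.map (TensorProduct.comm k H H).toLinearMap LinearMap.id)))

lemma lamR_tmul (B : DualQuasiBialgebra k H) (cM : M →ₗ[k] H ⊗[k] M)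
    (act : H →ₗ[k] M →ₗ[k] M) (h1 h2 g1 g2 : H) (m : M) :
    lamR B cM act ((h1 ⊗ₜ[k] h2) ⊗ₜ[k] ((g1 ⊗ₜ[k] g2) ⊗ₜ[k] m)) =
      act h2 (B2 B cM ((h1 ⊗ₜ[k] g2) ⊗ₜ[k] (act g1 m))) := by
  simp [lamR]

end DQH
namespace DQH
variable {k H : Type} [Field k] [AddCommGroup H] [Module k H]
variable {M N P X Y : Type} [AddCommGroup M] [Module k M] [AddCommGroup N] [Module k N]
  [AddCommGroup P] [Module k P] [AddCommGroup X] [Module k X] [AddCommGroup Y] [Module k Y]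

def zetaE (X : Type) [AddCommGroup X] [Module k X] :
    ((H ⊗[k] (H ⊗[k] H)) ⊗[k] X) ≃ₗ[k] (H ⊗[k] (H ⊗[k] (H ⊗[k] X))) :=
  (TensorProduct.assoc k H (H ⊗[k] H) X) ≪≫ₗ
    (TensorProduct.congr (LinearEquiv.refl k H) (TensorProduct.assoc k H H X))

@[simp] lemma zetaE_tmul (a b c : H) (x : X) :
    zetaE (k := k) X ((a ⊗ₜ[k] (b ⊗ₜ[k] c)) ⊗ₜ[k] x) = a ⊗ₜ[k] (b ⊗ₜ[k] (c ⊗ₜ[k] x)) := by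
  simp [zetaE]

/-- `((A⊗y)⊗u) ≃ ((A⊗u)⊗y)` -/
def swap23 (A U Y' : Type) [AddCommGroup A] [Module k A] [AddCommGroup U] [Module k U]
    [AddCommGroup Y'] [Module k Y'] : ((A ⊗[k] Y') ⊗[k] U) ≃ₗ[k] ((A ⊗[k] U) ⊗[k] Y') :=
  (TensorProduct.assoc k A Y' U) ≪≫ₗ
    (TensorProduct.congr (LinearEquiv.refl k A) (TensorProduct.comm k Y' U)) ≪≫ₗ
      (TensorProduct.assoc k A U Y').symm

@[simp] lemma swap23_tmul {A U Y' : Type} [AddCommGroup A] [Module k A] [AddCommGroup U]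
    [Module k U] [AddCommGroup Y'] [Module k Y'] (a : A) (y : Y') (u : U) :
    swap23 (k := k) A U Y' ((a ⊗ₜ[k] y) ⊗ₜ[k] u) = (a ⊗ₜ[k] u) ⊗ₜ[k] y := by
  simp [swap23]

def Omega (B : DualQuasiBialgebra k H) (cM : M →ₗ[k] H ⊗[k] M) (act : H →ₗ[k] M →ₗ[k] M)
    (X Y : Type) [AddCommGroup X] [Module k X] [AddCommGroup Y] [Module k Y] :
    (H ⊗[k] (H ⊗[k] (H ⊗[k] X))) ⊗[k] ((H ⊗[k] (H ⊗[k] (H ⊗[k] Y))) ⊗[k] (H ⊗[k] M))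
      →ₗ[k] (M ⊗[k] X) ⊗[k] Y :=
  (TensorProduct.assoc k M X Y).symm.toLinearMap ∘ₗ
    (TensorProduct.map (lamL B cM act) LinearMap.id) ∘ₗ
    (TensorProduct.tensorTensorTensorComm k (H ⊗[k] (H ⊗[k] H)) X
      ((H ⊗[k] (H ⊗[k] H)) ⊗[k] (H ⊗[k] M)) Y).toLinearMap ∘ₗ
    (TensorProduct.map LinearMap.id
      (swap23 (k := k) (H ⊗[k] (H ⊗[k] H)) (H ⊗[k] M) Y).toLinearMap) ∘ₗ
    (TensorProduct.map (zetaE (k := k) X).symm.toLinearMap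
      (TensorProduct.map (zetaE (k := k) Y).symm.toLinearMap LinearMap.id))

lemma Omega_eval (B : DualQuasiBialgebra k H) (cM : M →ₗ[k] H ⊗[k] M)
    (act : H →ₗ[k] M →ₗ[k] M) (w w' : H ⊗[k] (H ⊗[k] H)) (x0 : X) (y0 : Y)
    (u : H ⊗[k] M) :
    Omega B cM act X Y ((zetaE X (w ⊗ₜ[k] x0)) ⊗ₜ[k] ((zetaE Y (w' ⊗ₜ[k] y0)) ⊗ₜ[k] u)) =
      (lamL B cM act (w ⊗ₜ[k] (w' ⊗ₜ[k] u)) ⊗ₜ[k] x0) ⊗ₜ[k] y0 := by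
  simp [Omega]

def OmegaR (B : DualQuasiBialgebra k H) (cM : M →ₗ[k] H ⊗[k] M) (act : H →ₗ[k] M →ₗ[k] M)
    (X Y : Type) [AddCommGroup X] [Module k X] [AddCommGroup Y] [Module k Y] :
    (H ⊗[k] (H ⊗[k] X)) ⊗[k] ((H ⊗[k] (H ⊗[k] Y)) ⊗[k] M)
      →ₗ[k] (M ⊗[k] X) ⊗[k] Y :=
  (TensorProduct.assoc k M X Y).symm.toLinearMap ∘ₗ
    (TensorProduct.map (lamR B cM act) LinearMap.id) ∘ₗ
    (TensorProduct.tensorTensorTensorComm k (H ⊗[k] H) X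
      ((H ⊗[k] H) ⊗[k] M) Y).toLinearMap ∘ₗ
    (TensorProduct.map LinearMap.id (swap23 (k := k) (H ⊗[k] H) M Y).toLinearMap) ∘ₗ
    (TensorProduct.map (TensorProduct.assoc k H H X).symm.toLinearMap
      (TensorProduct.map (TensorProduct.assoc k H H Y).symm.toLinearMap LinearMap.id))

lemma OmegaR_eval (B : DualQuasiBialgebra k H) (cM : M →ₗ[k] H ⊗[k] M)
    (act : H →ₗ[k] M →ₗ[k] M) (w w' : H ⊗[k] H) (x0 : X) (y0 : Y) (m : M) :
    OmegaR B cM act X Y ((TensorProduct.assoc k H H X (w ⊗ₜ[k] x0)) ⊗ₜ[k]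
        ((TensorProduct.assoc k H H Y (w' ⊗ₜ[k] y0)) ⊗ₜ[k] m)) =
      (lamR B cM act (w ⊗ₜ[k] (w' ⊗ₜ[k] m)) ⊗ₜ[k] x0) ⊗ₜ[k] y0 := by
  simp [OmegaR]

/-- iterated coactions -/
def rho2 (cX : X →ₗ[k] H ⊗[k] X) : X →ₗ[k] H ⊗[k] (H ⊗[k] X) :=
  (TensorProduct.map LinearMap.id cX) ∘ₗ cX

def rho3 (cX : X →ₗ[k] H ⊗[k] X) : X →ₗ[k] H ⊗[k] (H ⊗[k] (H ⊗[k] X)) :=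
  (TensorProduct.map LinearMap.id (rho2 cX)) ∘ₗ cX

end DQH
namespace DQH
variable {k H : Type} [Field k] [AddCommGroup H] [Module k H]
variable {M N P X Y : Type} [AddCommGroup M] [Module k M] [AddCommGroup N] [Module k N]
  [AddCommGroup P] [Module k P] [AddCommGroup X] [Module k X] [AddCommGroup Y] [Module k Y]

theorem rho2_pres {ι : Type} (B : DualQuasiBialgebra k H) (cX : X →ₗ[k] H ⊗[k] X)
    (hX : IsComodule B cX) (x : X) (s : Finset ι) (x1 : ι → H) (x0 : ι → X)
    (hx : cX x = ∑ i ∈ s, x1 i ⊗ₜ[k] x0 i) :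
    rho2 cX x = ∑ i ∈ s, TensorProduct.assoc k H H X (B.comul (x1 i) ⊗ₜ[k] x0 i) := by
  rw [rho2, LinearMap.comp_apply, ← hX.1 x, hx]
  simp [map_sum]

lemma step_g (B : DualQuasiBialgebra k H) (cX : X →ₗ[k] H ⊗[k] X)
    (w : H ⊗[k] H) (x : X) :
    (TensorProduct.map LinearMap.id
        ((TensorProduct.assoc k H H X).toLinearMap ∘ₗ (TensorProduct.map B.comul LinearMap.id)))
      (TensorProduct.assoc k H H X (w ⊗ₜ[k] x)) =
      zetaE X ((TensorProduct.map LinearMap.id B.comul) w ⊗ₜ[k] x) := by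
  induction w using TensorProduct.induction_on with
  | zero => simp
  | tmul a b => simp [zetaE]
  | add u v hu hv =>
    simp only [TensorProduct.add_tmul, map_add, hu, hv]

theorem rho3_pres {ι : Type} (B : DualQuasiBialgebra k H) (cX : X →ₗ[k] H ⊗[k] X)
    (hX : IsComodule B cX) (x : X) (s : Finset ι) (x1 : ι → H) (x0 : ι → X)
    (hx : cX x = ∑ i ∈ s, x1 i ⊗ₜ[k] x0 i) :
    rho3 cX x = ∑ i ∈ s, zetaE X (cD3 B.comul (x1 i) ⊗ₜ[k] x0 i) := by
  set g : H ⊗[k] X →ₗ[k] H ⊗[k] (H ⊗[k] X) :=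
    (TensorProduct.assoc k H H X).toLinearMap ∘ₗ (TensorProduct.map B.comul LinearMap.id)
  have hg : rho2 cX = g ∘ₗ cX := by
    apply LinearMap.ext; intro v
    simp only [rho2, LinearMap.comp_apply, LinearEquiv.coe_coe, g]
    exact (hX.1 v).symm
  have hsplit : TensorProduct.map (LinearMap.id (M := H)) (g ∘ₗ cX) =
      (TensorProduct.map LinearMap.id g) ∘ₗ (TensorProduct.map LinearMap.id cX) := by
    apply TensorProduct.ext'; intro a v; simp
  have h3 : rho3 cX x = (TensorProduct.map LinearMap.id g) (rho2 cX x) := by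
    rw [rho3, LinearMap.comp_apply, hg, hsplit, LinearMap.comp_apply, ← hg]
    rfl
  rw [h3, rho2_pres B cX hX x s x1 x0 hx, map_sum]
  refine Finset.sum_congr rfl fun i _ => ?_
  simpa [cD3] using step_g B cX (B.comul (x1 i)) (x0 i)

end DQH
namespace DQH
variable {k H : Type} [Field k] [AddCommGroup H] [Module k H]
variable {M N P X Y : Type} [AddCommGroup M] [Module k M] [AddCommGroup N] [Module k N]
  [AddCommGroup P] [Module k P] [AddCommGroup X] [Module k X] [AddCommGroup Y] [Module k Y]

lemma Omega_tmul (B : DualQuasiBialgebra k H) (cM : M →ₗ[k] H ⊗[k] M)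
    (act : H →ₗ[k] M →ₗ[k] M) (x1 x2 x3 y1 y2 y3 : H) (x0 : X) (y0 : Y) (u : H ⊗[k] M) :
    Omega B cM act X Y ((x1 ⊗ₜ[k] (x2 ⊗ₜ[k] (x3 ⊗ₜ[k] x0))) ⊗ₜ[k]
        ((y1 ⊗ₜ[k] (y2 ⊗ₜ[k] (y3 ⊗ₜ[k] y0))) ⊗ₜ[k] u)) =
      (lamL B cM act ((x1 ⊗ₜ[k] (x2 ⊗ₜ[k] x3)) ⊗ₜ[k] ((y1 ⊗ₜ[k] (y2 ⊗ₜ[k] y3)) ⊗ₜ[k] u))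
        ⊗ₜ[k] x0) ⊗ₜ[k] y0 := by
  simpa using Omega_eval B cM act (x1 ⊗ₜ[k] (x2 ⊗ₜ[k] x3)) (y1 ⊗ₜ[k] (y2 ⊗ₜ[k] y3)) x0 y0 u

lemma OmegaR_tmul (B : DualQuasiBialgebra k H) (cM : M →ₗ[k] H ⊗[k] M)
    (act : H →ₗ[k] M →ₗ[k] M) (x1 x2 y1 y2 : H) (x0 : X) (y0 : Y) (m : M) :
    OmegaR B cM act X Y ((x1 ⊗ₜ[k] (x2 ⊗ₜ[k] x0)) ⊗ₜ[k]
        ((y1 ⊗ₜ[k] (y2 ⊗ₜ[k] y0)) ⊗ₜ[k] m)) =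
      (lamR B cM act ((x1 ⊗ₜ[k] x2) ⊗ₜ[k] ((y1 ⊗ₜ[k] y2) ⊗ₜ[k] m))
        ⊗ₜ[k] x0) ⊗ₜ[k] y0 := by
  simpa using OmegaR_eval B cM act (x1 ⊗ₜ[k] x2) (y1 ⊗ₜ[k] y2) x0 y0 m

theorem Omega_rho3 {ι ι' : Type} (B : DualQuasiBialgebra k H)
    (cM : M →ₗ[k] H ⊗[k] M) (act : H →ₗ[k] M →ₗ[k] M)
    (cX : X →ₗ[k] H ⊗[k] X) (cY : Y →ₗ[k] H ⊗[k] Y)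
    (hX : IsComodule B cX) (hY : IsComodule B cY) (x : X) (y : Y) (m : M)
    (sx : Finset ι) (x1 : ι → H) (x0 : ι → X) (hx : cX x = ∑ i ∈ sx, x1 i ⊗ₜ[k] x0 i)
    (sy : Finset ι') (y1 : ι' → H) (y0 : ι' → Y) (hy : cY y = ∑ j ∈ sy, y1 j ⊗ₜ[k] y0 j) :
    Omega B cM act X Y (rho3 cX x ⊗ₜ[k] (rho3 cY y ⊗ₜ[k] cM m)) =
      ∑ i ∈ sx, ∑ j ∈ sy,
        (lamL B cM act (cD3 B.comul (x1 i) ⊗ₜ[k] (cD3 B.comul (y1 j) ⊗ₜ[k] cM m))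
          ⊗ₜ[k] x0 i) ⊗ₜ[k] y0 j := by
  rw [rho3_pres B cX hX x sx x1 x0 hx, rho3_pres B cY hY y sy y1 y0 hy]
  rw [TensorProduct.sum_tmul, map_sum]
  refine Finset.sum_congr rfl fun i _ => ?_
  rw [TensorProduct.sum_tmul, TensorProduct.tmul_sum, map_sum]
  refine Finset.sum_congr rfl fun j _ => ?_
  exact Omega_eval B cM act _ _ _ _ _

theorem OmegaR_rho2 {ι ι' : Type} (B : DualQuasiBialgebra k H)
    (cM : M →ₗ[k] H ⊗[k] M) (act : H →ₗ[k] M →ₗ[k] M)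
    (cX : X →ₗ[k] H ⊗[k] X) (cY : Y →ₗ[k] H ⊗[k] Y)
    (hX : IsComodule B cX) (hY : IsComodule B cY) (x : X) (y : Y) (m : M)
    (sx : Finset ι) (x1 : ι → H) (x0 : ι → X) (hx : cX x = ∑ i ∈ sx, x1 i ⊗ₜ[k] x0 i)
    (sy : Finset ι') (y1 : ι' → H) (y0 : ι' → Y) (hy : cY y = ∑ j ∈ sy, y1 j ⊗ₜ[k] y0 j) :
    OmegaR B cM act X Y (rho2 cX x ⊗ₜ[k] (rho2 cY y ⊗ₜ[k] m)) =
      ∑ i ∈ sx, ∑ j ∈ sy,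
        (lamR B cM act (B.comul (x1 i) ⊗ₜ[k] (B.comul (y1 j) ⊗ₜ[k] m))
          ⊗ₜ[k] x0 i) ⊗ₜ[k] y0 j := by
  rw [rho2_pres B cX hX x sx x1 x0 hx, rho2_pres B cY hY y sy y1 y0 hy]
  rw [TensorProduct.sum_tmul, map_sum]
  refine Finset.sum_congr rfl fun i _ => ?_
  rw [TensorProduct.sum_tmul, TensorProduct.tmul_sum, map_sum]
  refine Finset.sum_congr rfl fun j _ => ?_
  exact OmegaR_eval B cM act _ _ _ _ _

theorem lamL_pres (B : DualQuasiBialgebra k H) (cM : M →ₗ[k] H ⊗[k] M)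
    (act : H →ₗ[k] M →ₗ[k] M) (h g : H) (m : M) (sh3 sg3 sm : Finset ℕ)
    (h1 h2 h3 g1 g2 g3 m1 : ℕ → H) (m0 : ℕ → M)
    (hh : cD3 B.comul h = ∑ i ∈ sh3, h1 i ⊗ₜ[k] (h2 i ⊗ₜ[k] h3 i))
    (hg : cD3 B.comul g = ∑ j ∈ sg3, g1 j ⊗ₜ[k] (g2 j ⊗ₜ[k] g3 j))
    (hm : cM m = ∑ r ∈ sm, m1 r ⊗ₜ[k] m0 r) :
    lamL B cM act (cD3 B.comul h ⊗ₜ[k] (cD3 B.comul g ⊗ₜ[k] cM m)) =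
      ∑ i ∈ sh3, ∑ j ∈ sg3, ∑ r ∈ sm,
        B.sigma (h1 i) (g1 j) (m1 r) •
          cweight cM ((B.sigma.flip (h3 i)).flip (g3 j))
            (act (B.mul (h2 i) (g2 j)) (m0 r)) := by
  rw [hh, hg, hm]
  rw [TensorProduct.sum_tmul, map_sum]
  refine Finset.sum_congr rfl fun i _ => ?_
  rw [TensorProduct.sum_tmul, TensorProduct.tmul_sum, map_sum]
  refine Finset.sum_congr rfl fun j _ => ?_
  rw [TensorProduct.tmul_sum, TensorProduct.tmul_sum, map_sum]
  refine Finset.sum_congr rfl fun r _ => ?_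
  rw [lamL_tmul, A2_cweight]

theorem lamR_pres (B : DualQuasiBialgebra k H) (cM : M →ₗ[k] H ⊗[k] M)
    (act : H →ₗ[k] M →ₗ[k] M) (h g : H) (m : M) (sh sg : Finset ℕ)
    (h1' h2' g1' g2' : ℕ → H)
    (hh : B.comul h = ∑ i ∈ sh, h1' i ⊗ₜ[k] h2' i)
    (hg : B.comul g = ∑ j ∈ sg, g1' j ⊗ₜ[k] g2' j) :
    lamR B cM act (B.comul h ⊗ₜ[k] (B.comul g ⊗ₜ[k] m)) =
      ∑ i ∈ sh, ∑ j ∈ sg,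
        act (h2' i) (cweight cM ((B.sigma (h1' i)).flip (g2' j)) (act (g1' j) m)) := by
  rw [hh, hg]
  rw [TensorProduct.sum_tmul, map_sum]
  refine Finset.sum_congr rfl fun i _ => ?_
  rw [TensorProduct.sum_tmul, TensorProduct.tmul_sum, map_sum]
  refine Finset.sum_congr rfl fun j _ => ?_
  rw [lamR_tmul, B2_cweight]

end DQH
namespace DQH
variable {k H : Type} [Field k] [AddCommGroup H] [Module k H]
variable {M X Y : Type} [AddCommGroup M] [Module k M] [AddCommGroup X] [Module k X]
  [AddCommGroup Y] [Module k Y]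

theorem evalR {ι ι' : Type} (B : DualQuasiBialgebra k H)
    (cM : M →ₗ[k] H ⊗[k] M) (act : H →ₗ[k] M →ₗ[k] M)
    (cX : X →ₗ[k] H ⊗[k] X) (cY : Y →ₗ[k] H ⊗[k] Y)
    (hX : IsComodule B cX) (hY : IsComodule B cY) (x : X) (y : Y) (m : M)
    (sx : Finset ι) (x1 : ι → H) (x0 : ι → X) (hx : cX x = ∑ i ∈ sx, x1 i ⊗ₜ[k] x0 i)
    (sy : Finset ι') (y1 : ι' → H) (y0 : ι' → Y) (hy : cY y = ∑ j ∈ sy, y1 j ⊗ₜ[k] y0 j) :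
    (TensorProduct.map (ydBraiding act cX) LinearMap.id)
        (assocInvMap B cX cM cY
          ((TensorProduct.map LinearMap.id (ydBraiding act cY)) (x ⊗ₜ[k] (y ⊗ₜ[k] m)))) =
      OmegaR B cM act X Y (rho2 cX x ⊗ₜ[k] (rho2 cY y ⊗ₜ[k] m)) := by
  -- presentations of second-level coactions
  choose sa Pf Qf hP using fun i => exists_pres (k := k) (cX (x0 i))
  choose sb Rf Sf hR using fun j => exists_pres (k := k) (cY (y0 j))
  choose sE Af A0f hA using fun j => exists_pres (k := k) (cM (act (y1 j) m))
  -- the canonical fully expanded sum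
  set F : ι → ℕ → ι' → ℕ → ℕ → (M ⊗[k] X) ⊗[k] Y := fun i a j b e =>
    B.sigma (x1 i) (Af j e) (Rf j b) •
      ((act (Pf i a) (A0f j e) ⊗ₜ[k] Qf i a) ⊗ₜ[k] Sf j b) with hF
  -- RHS expansion
  have eX : rho2 cX x = ∑ i ∈ sx, ∑ a ∈ sa i, x1 i ⊗ₜ[k] (Pf i a ⊗ₜ[k] Qf i a) := by
    rw [rho2, LinearMap.comp_apply, hx, map_sum]
    exact Finset.sum_congr rfl fun i _ => by
      rw [TensorProduct.map_tmul, hP i, TensorProduct.tmul_sum]; simp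
  have eY : rho2 cY y = ∑ j ∈ sy, ∑ b ∈ sb j, y1 j ⊗ₜ[k] (Rf j b ⊗ₜ[k] Sf j b) := by
    rw [rho2, LinearMap.comp_apply, hy, map_sum]
    exact Finset.sum_congr rfl fun j _ => by
      rw [TensorProduct.map_tmul, hR j, TensorProduct.tmul_sum]; simp
  have hRHS : OmegaR B cM act X Y (rho2 cX x ⊗ₜ[k] (rho2 cY y ⊗ₜ[k] m)) =
      ∑ i ∈ sx, ∑ a ∈ sa i, ∑ j ∈ sy, ∑ b ∈ sb j, ∑ e ∈ sE j, F i a j b e := by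
    rw [eX, eY]
    rw [TensorProduct.sum_tmul, map_sum]; refine Finset.sum_congr rfl fun i _ => ?_
    rw [TensorProduct.sum_tmul, map_sum]; refine Finset.sum_congr rfl fun a _ => ?_
    rw [TensorProduct.sum_tmul, TensorProduct.tmul_sum, map_sum]
    refine Finset.sum_congr rfl fun j _ => ?_
    rw [TensorProduct.sum_tmul, TensorProduct.tmul_sum, map_sum]
    refine Finset.sum_congr rfl fun b _ => ?_
    rw [OmegaR_tmul, lamR_tmul, B2_eq B cM _ _ _ (sE j) (Af j) (A0f j) (hA j)]
    rw [map_sum, TensorProduct.sum_tmul, TensorProduct.sum_tmul]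
    refine Finset.sum_congr rfl fun e _ => ?_
    rw [hF]
    simp [TensorProduct.smul_tmul']
  -- LHS expansion
  have step1 : (TensorProduct.map LinearMap.id (ydBraiding act cY)) (x ⊗ₜ[k] (y ⊗ₜ[k] m)) =
      ∑ j ∈ sy, x ⊗ₜ[k] (act (y1 j) m ⊗ₜ[k] y0 j) := by
    rw [TensorProduct.map_tmul, ydBraiding_eq act cY y m sy y1 y0 hy,
      TensorProduct.tmul_sum]
    simp
  have hLHS : (TensorProduct.map (ydBraiding act cX) LinearMap.id)
      (assocInvMap B cX cM cY
        ((TensorProduct.map LinearMap.id (ydBraiding act cY)) (x ⊗ₜ[k] (y ⊗ₜ[k] m)))) =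
      ∑ j ∈ sy, ∑ i ∈ sx, ∑ e ∈ sE j, ∑ b ∈ sb j, ∑ a ∈ sa i, F i a j b e := by
    rw [step1, map_sum, map_sum]
    refine Finset.sum_congr rfl fun j _ => ?_
    rw [assocInvMap_eq B cX cM cY x (act (y1 j) m) (y0 j) sx (sE j) (sb j)
      x1 x0 (Af j) (A0f j) (Rf j) (Sf j) hx (hA j) (hR j), map_sum]
    refine Finset.sum_congr rfl fun i _ => ?_
    rw [map_sum]
    refine Finset.sum_congr rfl fun e _ => ?_
    rw [map_sum]
    refine Finset.sum_congr rfl fun b _ => ?_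
    rw [map_smul, TensorProduct.map_tmul,
      ydBraiding_eq act cX (x0 i) (A0f j e) (sa i) (Pf i) (Qf i) (hP i),
      TensorProduct.sum_tmul, Finset.smul_sum]
    refine Finset.sum_congr rfl fun a _ => ?_
    simp [hF]
  rw [hLHS, hRHS]
  -- reorder the iterated sums
  calc ∑ j ∈ sy, ∑ i ∈ sx, ∑ e ∈ sE j, ∑ b ∈ sb j, ∑ a ∈ sa i, F i a j b e
      = ∑ j ∈ sy, ∑ i ∈ sx, ∑ e ∈ sE j, ∑ a ∈ sa i, ∑ b ∈ sb j, F i a j b e :=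
        Finset.sum_congr rfl fun j _ => Finset.sum_congr rfl fun i _ =>
          Finset.sum_congr rfl fun e _ => Finset.sum_comm
    _ = ∑ j ∈ sy, ∑ i ∈ sx, ∑ a ∈ sa i, ∑ e ∈ sE j, ∑ b ∈ sb j, F i a j b e :=
        Finset.sum_congr rfl fun j _ => Finset.sum_congr rfl fun i _ =>
          Finset.sum_comm
    _ = ∑ i ∈ sx, ∑ j ∈ sy, ∑ a ∈ sa i, ∑ e ∈ sE j, ∑ b ∈ sb j, F i a j b e :=
        Finset.sum_comm
    _ = ∑ i ∈ sx, ∑ a ∈ sa i, ∑ j ∈ sy, ∑ e ∈ sE j, ∑ b ∈ sb j, F i a j b e :=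
        Finset.sum_congr rfl fun i _ => Finset.sum_comm
    _ = ∑ i ∈ sx, ∑ a ∈ sa i, ∑ j ∈ sy, ∑ b ∈ sb j, ∑ e ∈ sE j, F i a j b e :=
        Finset.sum_congr rfl fun i _ => Finset.sum_congr rfl fun a _ =>
          Finset.sum_congr rfl fun j _ => Finset.sum_comm

end DQH
namespace DQH
variable {k H : Type} [Field k] [AddCommGroup H] [Module k H]
variable {M X Y : Type} [AddCommGroup M] [Module k M] [AddCommGroup X] [Module k X]
  [AddCommGroup Y] [Module k Y]

theorem assocInvMap_A2 {ι ι' : Type} (B : DualQuasiBialgebra k H)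
    (cM : M →ₗ[k] H ⊗[k] M) (cX : X →ₗ[k] H ⊗[k] X) (cY : Y →ₗ[k] H ⊗[k] Y)
    (v : M) (q : X) (s' : Y)
    (sq : Finset ι) (q1 : ι → H) (q0 : ι → X) (hq : cX q = ∑ c ∈ sq, q1 c ⊗ₜ[k] q0 c)
    (ss : Finset ι') (s1 : ι' → H) (s0 : ι' → Y) (hs : cY s' = ∑ d ∈ ss, s1 d ⊗ₜ[k] s0 d) :
    assocInvMap B cM cX cY (v ⊗ₜ[k] (q ⊗ₜ[k] s')) =
      ∑ c ∈ sq, ∑ d ∈ ss,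
        (A2 B cM ((q1 c ⊗ₜ[k] s1 d) ⊗ₜ[k] v) ⊗ₜ[k] q0 c) ⊗ₜ[k] s0 d := by
  obtain ⟨sE, Af, A0f, hA⟩ := exists_pres (k := k) (cM v)
  rw [assocInvMap_eq B cM cX cY v q s' sE sq ss Af A0f q1 q0 s1 s0 hA hq hs]
  calc ∑ e ∈ sE, ∑ c ∈ sq, ∑ d ∈ ss,
        B.sigma (Af e) (q1 c) (s1 d) • ((A0f e ⊗ₜ[k] q0 c) ⊗ₜ[k] s0 d)
      = ∑ c ∈ sq, ∑ e ∈ sE, ∑ d ∈ ss,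
        B.sigma (Af e) (q1 c) (s1 d) • ((A0f e ⊗ₜ[k] q0 c) ⊗ₜ[k] s0 d) := Finset.sum_comm
    _ = ∑ c ∈ sq, ∑ d ∈ ss, ∑ e ∈ sE,
        B.sigma (Af e) (q1 c) (s1 d) • ((A0f e ⊗ₜ[k] q0 c) ⊗ₜ[k] s0 d) :=
        Finset.sum_congr rfl fun c _ => Finset.sum_comm
    _ = ∑ c ∈ sq, ∑ d ∈ ss,
        (A2 B cM ((q1 c ⊗ₜ[k] s1 d) ⊗ₜ[k] v) ⊗ₜ[k] q0 c) ⊗ₜ[k] s0 d := by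
        refine Finset.sum_congr rfl fun c _ => Finset.sum_congr rfl fun d _ => ?_
        rw [A2_eq B cM _ _ v sE Af A0f hA, TensorProduct.sum_tmul, TensorProduct.sum_tmul]
        exact Finset.sum_congr rfl fun e _ => by simp [TensorProduct.smul_tmul']

end DQH
namespace DQH
variable {k H : Type} [Field k] [AddCommGroup H] [Module k H]
variable {M X Y : Type} [AddCommGroup M] [Module k M] [AddCommGroup X] [Module k X]
  [AddCommGroup Y] [Module k Y]

theorem evalL {ι ι' : Type} (B : DualQuasiBialgebra k H)
    (cM : M →ₗ[k] H ⊗[k] M) (act : H →ₗ[k] M →ₗ[k] M)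
    (cX : X →ₗ[k] H ⊗[k] X) (cY : Y →ₗ[k] H ⊗[k] Y)
    (hX : IsComodule B cX) (hY : IsComodule B cY) (x : X) (y : Y) (m : M)
    (sx : Finset ι) (x1 : ι → H) (x0 : ι → X) (hx : cX x = ∑ i ∈ sx, x1 i ⊗ₜ[k] x0 i)
    (sy : Finset ι') (y1 : ι' → H) (y0 : ι' → Y) (hy : cY y = ∑ j ∈ sy, y1 j ⊗ₜ[k] y0 j) :
    assocInvMap B cM cX cY
        ((ydBraiding act (coactTensor B cX cY))
          (assocInvMap B cX cY cM (x ⊗ₜ[k] (y ⊗ₜ[k] m)))) =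
      Omega B cM act X Y (rho3 cX x ⊗ₜ[k] (rho3 cY y ⊗ₜ[k] cM m)) := by
  obtain ⟨sm, m1, m0, hm⟩ := exists_pres (k := k) (cM m)
  choose sa Pf Qf hP using fun i => exists_pres (k := k) (cX (x0 i))
  choose sb Rf Sf hR using fun j => exists_pres (k := k) (cY (y0 j))
  choose sc Tf Uf hT using fun i a => exists_pres (k := k) (cX (Qf i a))
  choose sd Vf Wf hV using fun j b => exists_pres (k := k) (cY (Sf j b))
  set F : ι → ℕ → ℕ → ι' → ℕ → ℕ → ℕ → (M ⊗[k] X) ⊗[k] Y := fun i a c j b d r =>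
    B.sigma (x1 i) (y1 j) (m1 r) •
      ((A2 B cM ((Tf i a c ⊗ₜ[k] Vf j b d) ⊗ₜ[k]
          (act (B.mul (Pf i a) (Rf j b)) (m0 r))) ⊗ₜ[k] Uf i a c) ⊗ₜ[k] Wf j b d)
    with hF
  -- RHS expansion
  have eX : rho3 cX x = ∑ i ∈ sx, ∑ a ∈ sa i, ∑ c ∈ sc i a,
      x1 i ⊗ₜ[k] (Pf i a ⊗ₜ[k] (Tf i a c ⊗ₜ[k] Uf i a c)) := by
    rw [rho3, LinearMap.comp_apply, hx, map_sum]
    refine Finset.sum_congr rfl fun i _ => ?_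
    rw [TensorProduct.map_tmul]
    rw [rho2, LinearMap.comp_apply, hP i, map_sum, TensorProduct.tmul_sum]
    refine Finset.sum_congr rfl fun a _ => ?_
    rw [TensorProduct.map_tmul, hT i a, TensorProduct.tmul_sum, TensorProduct.tmul_sum]
    simp
  have eY : rho3 cY y = ∑ j ∈ sy, ∑ b ∈ sb j, ∑ d ∈ sd j b,
      y1 j ⊗ₜ[k] (Rf j b ⊗ₜ[k] (Vf j b d ⊗ₜ[k] Wf j b d)) := by
    rw [rho3, LinearMap.comp_apply, hy, map_sum]
    refine Finset.sum_congr rfl fun j _ => ?_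
    rw [TensorProduct.map_tmul]
    rw [rho2, LinearMap.comp_apply, hR j, map_sum, TensorProduct.tmul_sum]
    refine Finset.sum_congr rfl fun b _ => ?_
    rw [TensorProduct.map_tmul, hV j b, TensorProduct.tmul_sum, TensorProduct.tmul_sum]
    simp
  have hRHS : Omega B cM act X Y (rho3 cX x ⊗ₜ[k] (rho3 cY y ⊗ₜ[k] cM m)) =
      ∑ i ∈ sx, ∑ a ∈ sa i, ∑ c ∈ sc i a, ∑ j ∈ sy, ∑ b ∈ sb j, ∑ d ∈ sd j b,
        ∑ r ∈ sm, F i a c j b d r := by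
    rw [eX, eY]
    rw [TensorProduct.sum_tmul, map_sum]; refine Finset.sum_congr rfl fun i _ => ?_
    rw [TensorProduct.sum_tmul, map_sum]; refine Finset.sum_congr rfl fun a _ => ?_
    rw [TensorProduct.sum_tmul, map_sum]; refine Finset.sum_congr rfl fun c _ => ?_
    rw [TensorProduct.sum_tmul, TensorProduct.tmul_sum, map_sum]
    refine Finset.sum_congr rfl fun j _ => ?_
    rw [TensorProduct.sum_tmul, TensorProduct.tmul_sum, map_sum]
    refine Finset.sum_congr rfl fun b _ => ?_
    rw [TensorProduct.sum_tmul, TensorProduct.tmul_sum, map_sum]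
    refine Finset.sum_congr rfl fun d _ => ?_
    rw [Omega_tmul, hm, TensorProduct.tmul_sum, TensorProduct.tmul_sum, map_sum,
      TensorProduct.sum_tmul, TensorProduct.sum_tmul]
    refine Finset.sum_congr rfl fun r _ => ?_
    rw [lamL_tmul, hF]
    simp [TensorProduct.smul_tmul']
  -- LHS expansion
  have hLHS : assocInvMap B cM cX cY
      ((ydBraiding act (coactTensor B cX cY))
        (assocInvMap B cX cY cM (x ⊗ₜ[k] (y ⊗ₜ[k] m)))) =
      ∑ i ∈ sx, ∑ j ∈ sy, ∑ r ∈ sm, ∑ a ∈ sa i, ∑ b ∈ sb j, ∑ c ∈ sc i a,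
        ∑ d ∈ sd j b, F i a c j b d r := by
    rw [assocInvMap_eq B cX cY cM x y m sx sy sm x1 x0 y1 y0 m1 m0 hx hy hm,
      map_sum, map_sum]
    refine Finset.sum_congr rfl fun i _ => ?_
    rw [map_sum, map_sum]
    refine Finset.sum_congr rfl fun j _ => ?_
    rw [map_sum, map_sum]
    refine Finset.sum_congr rfl fun r _ => ?_
    have hpres : coactTensor B cX cY (x0 i ⊗ₜ[k] y0 j) =
        ∑ p ∈ (sa i) ×ˢ (sb j),
          B.mul (Pf i p.1) (Rf j p.2) ⊗ₜ[k] (Qf i p.1 ⊗ₜ[k] Sf j p.2) := by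
      rw [coactTensor_eq B cX cY (x0 i) (y0 j) (sa i) (sb j) (Pf i) (Qf i) (Rf j) (Sf j)
        (hP i) (hR j), Finset.sum_product]
    rw [map_smul, map_smul, ydBraiding_eq act (coactTensor B cX cY) _ (m0 r) _ _ _ hpres,
      map_sum, Finset.sum_product]
    rw [Finset.smul_sum]
    refine Finset.sum_congr rfl fun a _ => ?_
    rw [Finset.smul_sum]
    refine Finset.sum_congr rfl fun b _ => ?_
    rw [assocInvMap_A2 B cM cX cY _ (Qf i a) (Sf j b) (sc i a) (Tf i a) (Uf i a) (hT i a)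
      (sd j b) (Vf j b) (Wf j b) (hV j b), Finset.smul_sum]
    refine Finset.sum_congr rfl fun c _ => ?_
    rw [Finset.smul_sum]
  rw [hLHS, hRHS]
  refine Finset.sum_congr rfl fun i _ => ?_
  calc ∑ j ∈ sy, ∑ r ∈ sm, ∑ a ∈ sa i, ∑ b ∈ sb j, ∑ c ∈ sc i a, ∑ d ∈ sd j b,
        F i a c j b d r
      = ∑ j ∈ sy, ∑ a ∈ sa i, ∑ r ∈ sm, ∑ b ∈ sb j, ∑ c ∈ sc i a, ∑ d ∈ sd j b,
        F i a c j b d r := Finset.sum_congr rfl fun j _ => Finset.sum_comm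
    _ = ∑ a ∈ sa i, ∑ j ∈ sy, ∑ r ∈ sm, ∑ b ∈ sb j, ∑ c ∈ sc i a, ∑ d ∈ sd j b,
        F i a c j b d r := Finset.sum_comm
    _ = ∑ a ∈ sa i, ∑ j ∈ sy, ∑ r ∈ sm, ∑ c ∈ sc i a, ∑ b ∈ sb j, ∑ d ∈ sd j b,
        F i a c j b d r := Finset.sum_congr rfl fun a _ => Finset.sum_congr rfl fun j _ =>
          Finset.sum_congr rfl fun r _ => Finset.sum_comm
    _ = ∑ a ∈ sa i, ∑ j ∈ sy, ∑ c ∈ sc i a, ∑ r ∈ sm, ∑ b ∈ sb j, ∑ d ∈ sd j b,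
        F i a c j b d r := Finset.sum_congr rfl fun a _ => Finset.sum_congr rfl fun j _ =>
          Finset.sum_comm
    _ = ∑ a ∈ sa i, ∑ c ∈ sc i a, ∑ j ∈ sy, ∑ r ∈ sm, ∑ b ∈ sb j, ∑ d ∈ sd j b,
        F i a c j b d r := Finset.sum_congr rfl fun a _ => Finset.sum_comm
    _ = ∑ a ∈ sa i, ∑ c ∈ sc i a, ∑ j ∈ sy, ∑ b ∈ sb j, ∑ r ∈ sm, ∑ d ∈ sd j b,
        F i a c j b d r := Finset.sum_congr rfl fun a _ => Finset.sum_congr rfl fun c _ =>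
          Finset.sum_congr rfl fun j _ => Finset.sum_comm
    _ = ∑ a ∈ sa i, ∑ c ∈ sc i a, ∑ j ∈ sy, ∑ b ∈ sb j, ∑ d ∈ sd j b, ∑ r ∈ sm,
        F i a c j b d r := Finset.sum_congr rfl fun a _ => Finset.sum_congr rfl fun c _ =>
          Finset.sum_congr rfl fun j _ => Finset.sum_congr rfl fun b _ => Finset.sum_comm

end DQH
namespace DQH
variable {k H : Type} [Field k] [AddCommGroup H] [Module k H]
variable {M X Y : Type} [AddCommGroup M] [Module k M] [AddCommGroup X] [Module k X]
  [AddCommGroup Y] [Module k Y]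

/-- element form of the (YD1) axiom -/
theorem yd1_el (B : DualQuasiBialgebra k H) (cM : M →ₗ[k] H ⊗[k] M)
    (act : H →ₗ[k] M →ₗ[k] M) (hYD : IsYetterDrinfeld B cM act) (h g : H) (m : M) :
    lamL B cM act (cD3 B.comul h ⊗ₜ[k] (cD3 B.comul g ⊗ₜ[k] cM m)) =
      lamR B cM act (B.comul h ⊗ₜ[k] (B.comul g ⊗ₜ[k] m)) := by
  obtain ⟨sh3, h1, h2, h3, hh3⟩ := exists_pres3 (k := k) (cD3 B.comul h)
  obtain ⟨sg3, g1, g2, g3, hg3⟩ := exists_pres3 (k := k) (cD3 B.comul g)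
  obtain ⟨sh, h1', h2', hh⟩ := exists_pres (k := k) (B.comul h)
  obtain ⟨sg, g1', g2', hg⟩ := exists_pres (k := k) (B.comul g)
  obtain ⟨sm, m1, m0, hm⟩ := exists_pres (k := k) (cM m)
  rw [lamL_pres B cM act h g m sh3 sg3 sm h1 h2 h3 g1 g2 g3 m1 m0 hh3 hg3 hm,
    lamR_pres B cM act h g m sh sg h1' h2' g1' g2' hh hg]
  exact hYD.yd1 h g m sh3 sg3 sh sg sm h1 h2 h3 g1 g2 g3 h1' h2' g1' g2' m1 m0 hh3 hg3 hh hg hm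

/-- hexagon for the Yetter-Drinfeld braiding -/
theorem ydBraiding_hexagon (B : DualQuasiBialgebra k H) (cM : M →ₗ[k] H ⊗[k] M)
    (act : H →ₗ[k] M →ₗ[k] M) (hYD : IsYetterDrinfeld B cM act)
    (cX : X →ₗ[k] H ⊗[k] X) (cY : Y →ₗ[k] H ⊗[k] Y)
    (hX : IsComodule B cX) (hY : IsComodule B cY) :
    (assocInvMap B cM cX cY) ∘ₗ (ydBraiding act (coactTensor B cX cY)) ∘ₗ
        (assocInvMap B cX cY cM) =
      (TensorProduct.map (ydBraiding act cX) LinearMap.id) ∘ₗ (assocInvMap B cX cM cY) ∘ₗ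
        (TensorProduct.map LinearMap.id (ydBraiding act cY)) := by
  apply TensorProduct.ext'
  intro x z
  induction z using TensorProduct.induction_on with
  | zero => simp
  | add u v hu hv => simp only [TensorProduct.tmul_add, map_add, hu, hv]
  | tmul y m =>
    obtain ⟨sx, x1, x0, hx⟩ := exists_pres (k := k) (cX x)
    obtain ⟨sy, y1, y0, hy⟩ := exists_pres (k := k) (cY y)
    simp only [LinearMap.comp_apply]
    rw [evalL B cM act cX cY hX hY x y m sx x1 x0 hx sy y1 y0 hy,
      Omega_rho3 B cM act cX cY hX hY x y m sx x1 x0 hx sy y1 y0 hy,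
      evalR B cM act cX cY hX hY x y m sx x1 x0 hx sy y1 y0 hy,
      OmegaR_rho2 B cM act cX cY hX hY x y m sx x1 x0 hx sy y1 y0 hy]
    exact Finset.sum_congr rfl fun i _ => Finset.sum_congr rfl fun j _ => by
      rw [yd1_el B cM act hYD (x1 i) (y1 j) m]

end DQH
namespace DQH
variable {k H : Type} [Field k] [AddCommGroup H] [Module k H]
variable {M N : Type} [AddCommGroup M] [Module k M] [AddCommGroup N] [Module k N]

/-- `(h1⊗h2)⊗(m1⊗m0) ↦ h1m1 ⊗ act h2 m0` -/
def psiR' (B : DualQuasiBialgebra k H) (act : H →ₗ[k] M →ₗ[k] M) :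
    (H ⊗[k] H) ⊗[k] (H ⊗[k] M) →ₗ[k] H ⊗[k] M :=
  (TensorProduct.map (mu2 B) (TensorProduct.lift act)) ∘ₗ
    (TensorProduct.tensorTensorTensorComm k H H H M).toLinearMap

@[simp] lemma psiR'_tmul (B : DualQuasiBialgebra k H) (act : H →ₗ[k] M →ₗ[k] M)
    (h1 h2 m1 : H) (m0 : M) :
    psiR' B act ((h1 ⊗ₜ[k] h2) ⊗ₜ[k] (m1 ⊗ₜ[k] m0)) =
      B.mul h1 m1 ⊗ₜ[k] act h2 m0 := by
  simp [psiR', mu2]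

/-- `h1⊗h2 ↦ (act h1 m)₍₋₁₎ h2 ⊗ (act h1 m)₍₀₎` -/
def psiL' (B : DualQuasiBialgebra k H) (cM : M →ₗ[k] H ⊗[k] M)
    (act : H →ₗ[k] M →ₗ[k] M) (m : M) : H ⊗[k] H →ₗ[k] H ⊗[k] M :=
  (TensorProduct.map (mu2 B) LinearMap.id) ∘ₗ
    (swap23 (k := k) H H M).toLinearMap ∘ₗ
      (TensorProduct.map (cM ∘ₗ (act.flip m)) LinearMap.id)

lemma psiL'_tmul (B : DualQuasiBialgebra k H) (cM : M →ₗ[k] H ⊗[k] M)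
    (act : H →ₗ[k] M →ₗ[k] M) (m : M) (h1 h2 : H) :
    psiL' B cM act m (h1 ⊗ₜ[k] h2) =
      (TensorProduct.map (B.mul.flip h2) LinearMap.id) (cM (act h1 m)) := by
  simp only [psiL', LinearMap.comp_apply, TensorProduct.map_tmul, LinearMap.id_coe, id_eq,
    LinearMap.flip_apply]
  generalize cM (act h1 m) = w
  induction w using TensorProduct.induction_on with
  | zero => simp
  | tmul a b => simp [mu2]
  | add u v hu hv => simp only [TensorProduct.add_tmul, map_add, hu, hv]

def psiL (B : DualQuasiBialgebra k H) (cM : M →ₗ[k] H ⊗[k] M)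
    (act : H →ₗ[k] M →ₗ[k] M) (m : M) (N : Type) [AddCommGroup N] [Module k N] :
    H ⊗[k] (H ⊗[k] N) →ₗ[k] H ⊗[k] (M ⊗[k] N) :=
  (TensorProduct.map (mu2 B) LinearMap.id) ∘ₗ
    (TensorProduct.tensorTensorTensorComm k H M H N).toLinearMap ∘ₗ
      (TensorProduct.map (cM ∘ₗ (act.flip m)) LinearMap.id)

lemma psiL_apply (B : DualQuasiBialgebra k H) (cM : M →ₗ[k] H ⊗[k] M)
    (act : H →ₗ[k] M →ₗ[k] M) (m : M) (u v : H) (n0 : N) :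
    psiL B cM act m N (u ⊗ₜ[k] (v ⊗ₜ[k] n0)) =
      (TensorProduct.map LinearMap.id ((TensorProduct.mk k M N).flip n0))
        (psiL' B cM act m (u ⊗ₜ[k] v)) := by
  rw [psiL'_tmul]
  simp only [psiL, LinearMap.comp_apply, TensorProduct.map_tmul, LinearMap.id_coe, id_eq,
    LinearMap.flip_apply]
  generalize cM (act u m) = w
  induction w using TensorProduct.induction_on with
  | zero => simp
  | tmul a b => simp [mu2]
  | add w1 w2 h1 h2 => simp only [TensorProduct.add_tmul, map_add, h1, h2]

def psiR (B : DualQuasiBialgebra k H) (act : H →ₗ[k] M →ₗ[k] M)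
    (N : Type) [AddCommGroup N] [Module k N] :
    (H ⊗[k] (H ⊗[k] N)) ⊗[k] (H ⊗[k] M) →ₗ[k] H ⊗[k] (M ⊗[k] N) :=
  (TensorProduct.map (mu2 B)
      ((TensorProduct.map (TensorProduct.lift act) LinearMap.id) ∘ₗ
        (swap23 (k := k) H M N).toLinearMap)) ∘ₗ
    (TensorProduct.tensorTensorTensorComm k H (H ⊗[k] N) H M).toLinearMap

lemma psiR_apply (B : DualQuasiBialgebra k H) (act : H →ₗ[k] M →ₗ[k] M)
    (u v : H) (n0 : N) (w : H ⊗[k] M) :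
    psiR B act N ((u ⊗ₜ[k] (v ⊗ₜ[k] n0)) ⊗ₜ[k] w) =
      (TensorProduct.map LinearMap.id ((TensorProduct.mk k M N).flip n0))
        (psiR' B act ((u ⊗ₜ[k] v) ⊗ₜ[k] w)) := by
  induction w using TensorProduct.induction_on with
  | zero => simp
  | tmul m1 m0 => simp [psiR, psiR', mu2]
  | add w1 w2 h1 h2 => simp only [TensorProduct.tmul_add, map_add, h1, h2]

theorem yd3L_pres {ι ι' : Type} (B : DualQuasiBialgebra k H) (cM : M →ₗ[k] H ⊗[k] M)
    (act : H →ₗ[k] M →ₗ[k] M) (h : H) (m : M)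
    (sh : Finset ι) (h1 h2 : ι → H) (hh : B.comul h = ∑ i ∈ sh, h1 i ⊗ₜ[k] h2 i)
    (sm : Finset ι') (m1 : ι' → H) (m0 : ι' → M) (hm : cM m = ∑ r ∈ sm, m1 r ⊗ₜ[k] m0 r) :
    ∑ i ∈ sh, ∑ r ∈ sm, B.mul (h1 i) (m1 r) ⊗ₜ[k] act (h2 i) (m0 r) =
      psiR' B act (B.comul h ⊗ₜ[k] cM m) := by
  rw [hh, hm, TensorProduct.sum_tmul, map_sum]
  refine Finset.sum_congr rfl fun i _ => ?_
  rw [TensorProduct.tmul_sum, map_sum]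
  exact Finset.sum_congr rfl fun r _ => (psiR'_tmul B act _ _ _ _).symm

theorem yd3R_pres {ι : Type} (B : DualQuasiBialgebra k H) (cM : M →ₗ[k] H ⊗[k] M)
    (act : H →ₗ[k] M →ₗ[k] M) (h : H) (m : M)
    (sh : Finset ι) (h1 h2 : ι → H) (hh : B.comul h = ∑ i ∈ sh, h1 i ⊗ₜ[k] h2 i) :
    ∑ i ∈ sh, (TensorProduct.map (B.mul.flip (h2 i)) LinearMap.id) (cM (act (h1 i) m)) =
      psiL' B cM act m (B.comul h) := by
  rw [hh, map_sum]
  exact Finset.sum_congr rfl fun i _ => (psiL'_tmul B cM act m _ _).symm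

theorem yd3_el (B : DualQuasiBialgebra k H) (cM : M →ₗ[k] H ⊗[k] M)
    (act : H →ₗ[k] M →ₗ[k] M) (hYD : IsYetterDrinfeld B cM act) (h : H) (m : M) :
    psiR' B act (B.comul h ⊗ₜ[k] cM m) = psiL' B cM act m (B.comul h) := by
  obtain ⟨sh, h1, h2, hh⟩ := exists_pres (k := k) (B.comul h)
  obtain ⟨sm, m1, m0, hm⟩ := exists_pres (k := k) (cM m)
  rw [← yd3L_pres B cM act h m sh h1 h2 hh sm m1 m0 hm,
    ← yd3R_pres B cM act h m sh h1 h2 hh]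
  exact hYD.yd3 h m sh sm h1 h2 m1 m0 hh hm

end DQH
namespace DQH
variable {k H : Type} [Field k] [AddCommGroup H] [Module k H]
variable {M N : Type} [AddCommGroup M] [Module k M] [AddCommGroup N] [Module k N]

lemma psiL_eq {ι : Type} (B : DualQuasiBialgebra k H) (cM : M →ₗ[k] H ⊗[k] M)
    (act : H →ₗ[k] M →ₗ[k] M) (m : M) (u v : H) (n0 : N)
    (sE : Finset ι) (Af : ι → H) (A0f : ι → M)
    (hA : cM (act u m) = ∑ e ∈ sE, Af e ⊗ₜ[k] A0f e) :
    psiL B cM act m N (u ⊗ₜ[k] (v ⊗ₜ[k] n0)) =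
      ∑ e ∈ sE, B.mul (Af e) v ⊗ₜ[k] (A0f e ⊗ₜ[k] n0) := by
  simp only [psiL, LinearMap.comp_apply, TensorProduct.map_tmul, LinearMap.id_coe, id_eq,
    LinearMap.flip_apply, hA]
  rw [TensorProduct.sum_tmul, map_sum, map_sum]
  exact Finset.sum_congr rfl fun e _ => by simp [mu2]

lemma psiR_eq {ι : Type} (B : DualQuasiBialgebra k H)
    (act : H →ₗ[k] M →ₗ[k] M) (m : M) (u v : H) (n0 : N) (cM : M →ₗ[k] H ⊗[k] M)
    (sm : Finset ι) (m1 : ι → H) (m0 : ι → M)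
    (hm : cM m = ∑ r ∈ sm, m1 r ⊗ₜ[k] m0 r) :
    psiR B act N ((u ⊗ₜ[k] (v ⊗ₜ[k] n0)) ⊗ₜ[k] cM m) =
      ∑ r ∈ sm, B.mul u (m1 r) ⊗ₜ[k] (act v (m0 r) ⊗ₜ[k] n0) := by
  rw [hm, TensorProduct.tmul_sum, map_sum]
  exact Finset.sum_congr rfl fun r _ => by simp [psiR, mu2]

theorem ydBraiding_colinear (B : DualQuasiBialgebra k H) (cM : M →ₗ[k] H ⊗[k] M)
    (act : H →ₗ[k] M →ₗ[k] M) (hYD : IsYetterDrinfeld B cM act)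
    (cN : N →ₗ[k] H ⊗[k] N) (hN : IsComodule B cN) :
    (coactTensor B cM cN) ∘ₗ (ydBraiding act cN) =
      (TensorProduct.map LinearMap.id (ydBraiding act cN)) ∘ₗ (coactTensor B cN cM) := by
  apply TensorProduct.ext'
  intro n m
  obtain ⟨sn, n1, n0, hn⟩ := exists_pres (k := k) (cN n)
  obtain ⟨sm, m1, m0, hm⟩ := exists_pres (k := k) (cM m)
  choose sa uf vf hu using fun i => exists_pres (k := k) (B.comul (n1 i))
  choose sc Pf Qf hP using fun i => exists_pres (k := k) (cN (n0 i))
  choose sE Af A0f hA using fun i => exists_pres (k := k) (cM (act (n1 i) m))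
  have eN : rho2 cN n = ∑ i ∈ sn, ∑ c ∈ sc i, n1 i ⊗ₜ[k] (Pf i c ⊗ₜ[k] Qf i c) := by
    rw [rho2, LinearMap.comp_apply, hn, map_sum]
    exact Finset.sum_congr rfl fun i _ => by
      rw [TensorProduct.map_tmul, hP i, TensorProduct.tmul_sum]; simp
  have hL : coactTensor B cM cN (ydBraiding act cN (n ⊗ₜ[k] m)) =
      psiL B cM act m N (rho2 cN n) := by
    rw [ydBraiding_eq act cN n m sn n1 n0 hn, map_sum, eN, map_sum]
    refine Finset.sum_congr rfl fun i _ => ?_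
    rw [coactTensor_eq B cM cN _ (n0 i) (sE i) (sc i) (Af i) (A0f i) (Pf i) (Qf i)
      (hA i) (hP i), map_sum]
    rw [Finset.sum_comm]
    refine Finset.sum_congr rfl fun c _ => ?_
    rw [psiL_eq B cM act m (n1 i) (Pf i c) (Qf i c) (sE i) (Af i) (A0f i) (hA i)]
  have hR : (TensorProduct.map LinearMap.id (ydBraiding act cN))
      (coactTensor B cN cM (n ⊗ₜ[k] m)) = psiR B act N (rho2 cN n ⊗ₜ[k] cM m) := by
    rw [coactTensor_eq B cN cM n m sn sm n1 n0 m1 m0 hn hm, map_sum, eN,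
      TensorProduct.sum_tmul, map_sum]
    refine Finset.sum_congr rfl fun i _ => ?_
    rw [map_sum]
    calc ∑ r ∈ sm, (TensorProduct.map LinearMap.id (ydBraiding act cN))
          (B.mul (n1 i) (m1 r) ⊗ₜ[k] (n0 i ⊗ₜ[k] m0 r))
        = ∑ r ∈ sm, ∑ c ∈ sc i,
            B.mul (n1 i) (m1 r) ⊗ₜ[k] (act (Pf i c) (m0 r) ⊗ₜ[k] Qf i c) := by
          refine Finset.sum_congr rfl fun r _ => ?_
          rw [TensorProduct.map_tmul,
            ydBraiding_eq act cN (n0 i) (m0 r) (sc i) (Pf i) (Qf i) (hP i),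
            TensorProduct.tmul_sum]
          simp
      _ = ∑ c ∈ sc i, ∑ r ∈ sm,
            B.mul (n1 i) (m1 r) ⊗ₜ[k] (act (Pf i c) (m0 r) ⊗ₜ[k] Qf i c) :=
          Finset.sum_comm
      _ = ∑ c ∈ sc i, psiR B act N ((n1 i ⊗ₜ[k] (Pf i c ⊗ₜ[k] Qf i c)) ⊗ₜ[k] cM m) := by
          refine Finset.sum_congr rfl fun c _ => ?_
          rw [psiR_eq B act m (n1 i) (Pf i c) (Qf i c) cM sm m1 m0 hm]
      _ = psiR B act N ((∑ c ∈ sc i, n1 i ⊗ₜ[k] (Pf i c ⊗ₜ[k] Qf i c)) ⊗ₜ[k] cM m) := by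
          rw [TensorProduct.sum_tmul, map_sum]
  rw [LinearMap.comp_apply, LinearMap.comp_apply, hL, hR]
  -- bridge through coassociativity and (YD3)
  have bL : psiL B cM act m N (rho2 cN n) =
      ∑ i ∈ sn, (TensorProduct.map LinearMap.id ((TensorProduct.mk k M N).flip (n0 i)))
        (psiL' B cM act m (B.comul (n1 i))) := by
    rw [rho2_pres B cN hN n sn n1 n0 hn, map_sum]
    refine Finset.sum_congr rfl fun i _ => ?_
    rw [hu i]
    simp only [TensorProduct.sum_tmul, map_sum]
    refine Finset.sum_congr rfl fun a _ => ?_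
    rw [TensorProduct.assoc_tmul, psiL_apply]
  have bR : psiR B act N (rho2 cN n ⊗ₜ[k] cM m) =
      ∑ i ∈ sn, (TensorProduct.map LinearMap.id ((TensorProduct.mk k M N).flip (n0 i)))
        (psiR' B act (B.comul (n1 i) ⊗ₜ[k] cM m)) := by
    rw [rho2_pres B cN hN n sn n1 n0 hn, TensorProduct.sum_tmul, map_sum]
    refine Finset.sum_congr rfl fun i _ => ?_
    rw [hu i]
    simp only [TensorProduct.sum_tmul, map_sum]
    refine Finset.sum_congr rfl fun a _ => ?_
    rw [TensorProduct.assoc_tmul, psiR_apply]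
  rw [bL, bR]
  exact Finset.sum_congr rfl fun i _ => by
    rw [yd3_el B cM act hYD (n1 i) m]

end DQH
namespace DQH
variable {k H : Type} [Field k] [AddCommGroup H] [Module k H]
variable {X Y : Type} [AddCommGroup X] [Module k X] [AddCommGroup Y] [Module k Y]

def theta (B : DualQuasiBialgebra k H) (X Y : Type) [AddCommGroup X] [Module k X]
    [AddCommGroup Y] [Module k Y] :
    (H ⊗[k] (H ⊗[k] X)) ⊗[k] (H ⊗[k] (H ⊗[k] Y)) →ₗ[k] H ⊗[k] (H ⊗[k] (X ⊗[k] Y)) :=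
  (TensorProduct.map LinearMap.id (TensorProduct.map (mu2 B) LinearMap.id)) ∘ₗ
    (TensorProduct.map (mu2 B) (TensorProduct.tensorTensorTensorComm k H X H Y).toLinearMap) ∘ₗ
      (TensorProduct.tensorTensorTensorComm k H (H ⊗[k] X) H (H ⊗[k] Y)).toLinearMap

@[simp] lemma theta_tmul (B : DualQuasiBialgebra k H) (u v w z : H) (x : X) (y : Y) :
    theta B X Y ((u ⊗ₜ[k] (v ⊗ₜ[k] x)) ⊗ₜ[k] (w ⊗ₜ[k] (z ⊗ₜ[k] y))) =
      B.mul u w ⊗ₜ[k] (B.mul v z ⊗ₜ[k] (x ⊗ₜ[k] y)) := by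
  simp [theta, mu2]

theorem isComodule_coactTensor (B : DualQuasiBialgebra k H)
    (cX : X →ₗ[k] H ⊗[k] X) (cY : Y →ₗ[k] H ⊗[k] Y)
    (hX : IsComodule B cX) (hY : IsComodule B cY) :
    IsComodule B (coactTensor B cX cY) := by
  constructor
  · intro w
    induction w using TensorProduct.induction_on with
    | zero => simp
    | add u v h1 h2 => simp only [map_add, h1, h2]
    | tmul x y =>
      obtain ⟨sx, x1, x0, hx⟩ := exists_pres (k := k) (cX x)
      obtain ⟨sy, y1, y0, hy⟩ := exists_pres (k := k) (cY y)
      choose sa uf vf hu using fun i => exists_pres (k := k) (B.comul (x1 i))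
      choose sb wf zf hw using fun j => exists_pres (k := k) (B.comul (y1 j))
      choose sc Pf Qf hP using fun i => exists_pres (k := k) (cX (x0 i))
      choose sd Rf Sf hR using fun j => exists_pres (k := k) (cY (y0 j))
      have eX : rho2 cX x = ∑ i ∈ sx, ∑ c ∈ sc i, x1 i ⊗ₜ[k] (Pf i c ⊗ₜ[k] Qf i c) := by
        rw [rho2, LinearMap.comp_apply, hx, map_sum]
        exact Finset.sum_congr rfl fun i _ => by
          rw [TensorProduct.map_tmul, hP i, TensorProduct.tmul_sum]; simp
      have eY : rho2 cY y = ∑ j ∈ sy, ∑ d ∈ sd j, y1 j ⊗ₜ[k] (Rf j d ⊗ₜ[k] Sf j d) := by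
        rw [rho2, LinearMap.comp_apply, hy, map_sum]
        exact Finset.sum_congr rfl fun j _ => by
          rw [TensorProduct.map_tmul, hR j, TensorProduct.tmul_sum]; simp
      have hL : (TensorProduct.assoc k H H (X ⊗[k] Y))
          ((TensorProduct.map B.comul LinearMap.id) (coactTensor B cX cY (x ⊗ₜ[k] y))) =
          theta B X Y (rho2 cX x ⊗ₜ[k] rho2 cY y) := by
        rw [coactTensor_eq B cX cY x y sx sy x1 x0 y1 y0 hx hy]
        rw [rho2_pres B cX hX x sx x1 x0 hx, rho2_pres B cY hY y sy y1 y0 hy]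
        rw [TensorProduct.sum_tmul]
        simp only [map_sum]
        refine Finset.sum_congr rfl fun i _ => ?_
        rw [TensorProduct.tmul_sum]
        simp only [map_sum]
        refine Finset.sum_congr rfl fun j _ => ?_
        rw [TensorProduct.map_tmul,
          B.comul_mul (x1 i) (y1 j) (sa i) (sb j) (uf i) (vf i) (wf j) (zf j) (hu i) (hw j)]
        rw [hu i, hw j]
        simp only [TensorProduct.sum_tmul, map_sum, Finset.sum_congr]
        refine Finset.sum_congr rfl fun a _ => ?_
        rw [TensorProduct.assoc_tmul]
        simp only [TensorProduct.tmul_sum, map_sum, TensorProduct.sum_tmul]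
        refine Finset.sum_congr rfl fun b _ => ?_
        simp [LinearMap.id_coe]
      have hR' : (TensorProduct.map LinearMap.id (coactTensor B cX cY))
          (coactTensor B cX cY (x ⊗ₜ[k] y)) =
          theta B X Y (rho2 cX x ⊗ₜ[k] rho2 cY y) := by
        rw [coactTensor_eq B cX cY x y sx sy x1 x0 y1 y0 hx hy, eX, eY]
        rw [TensorProduct.sum_tmul]
        simp only [map_sum]
        refine Finset.sum_congr rfl fun i _ => ?_
        calc ∑ j ∈ sy, (TensorProduct.map LinearMap.id (coactTensor B cX cY))
              (B.mul (x1 i) (y1 j) ⊗ₜ[k] (x0 i ⊗ₜ[k] y0 j))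
            = ∑ j ∈ sy, ∑ c ∈ sc i, ∑ d ∈ sd j,
                B.mul (x1 i) (y1 j) ⊗ₜ[k]
                  (B.mul (Pf i c) (Rf j d) ⊗ₜ[k] (Qf i c ⊗ₜ[k] Sf j d)) := by
              refine Finset.sum_congr rfl fun j _ => ?_
              rw [TensorProduct.map_tmul,
                coactTensor_eq B cX cY (x0 i) (y0 j) (sc i) (sd j) (Pf i) (Qf i) (Rf j)
                  (Sf j) (hP i) (hR j)]
              simp only [TensorProduct.tmul_sum, LinearMap.id_coe, id_eq]
          _ = ∑ c ∈ sc i, ∑ j ∈ sy, ∑ d ∈ sd j,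
                B.mul (x1 i) (y1 j) ⊗ₜ[k]
                  (B.mul (Pf i c) (Rf j d) ⊗ₜ[k] (Qf i c ⊗ₜ[k] Sf j d)) := Finset.sum_comm
          _ = theta B X Y ((∑ c ∈ sc i, x1 i ⊗ₜ[k] (Pf i c ⊗ₜ[k] Qf i c)) ⊗ₜ[k]
                (∑ j ∈ sy, ∑ d ∈ sd j, y1 j ⊗ₜ[k] (Rf j d ⊗ₜ[k] Sf j d))) := by
              rw [TensorProduct.sum_tmul]
              simp only [map_sum]
              refine Finset.sum_congr rfl fun c _ => ?_
              simp only [TensorProduct.tmul_sum, map_sum]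
              refine Finset.sum_congr rfl fun j _ => Finset.sum_congr rfl fun d _ => ?_
              rw [theta_tmul]
      rw [hL, hR']
  · intro w
    induction w using TensorProduct.induction_on with
    | zero => simp
    | add u v h1 h2 => simp only [map_add, h1, h2]
    | tmul x y =>
      obtain ⟨sx, x1, x0, hx⟩ := exists_pres (k := k) (cX x)
      obtain ⟨sy, y1, y0, hy⟩ := exists_pres (k := k) (cY y)
      have ex : ∑ i ∈ sx, B.counit (x1 i) • x0 i = x := by
        have h2 := hX.2 x
        rw [hx] at h2
        simpa [map_sum] using h2
      have ey : ∑ j ∈ sy, B.counit (y1 j) • y0 j = y := by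
        have h2 := hY.2 y
        rw [hy] at h2
        simpa [map_sum] using h2
      rw [coactTensor_eq B cX cY x y sx sy x1 x0 y1 y0 hx hy]
      simp only [map_sum]
      rw [← ex, ← ey, TensorProduct.sum_tmul]
      refine Finset.sum_congr rfl fun i _ => ?_
      rw [TensorProduct.tmul_sum]
      refine Finset.sum_congr rfl fun j _ => ?_
      simp only [TensorProduct.map_tmul, LinearMap.id_coe, id_eq, TensorProduct.lid_tmul,
        B.counit_mul, TensorProduct.smul_tmul', TensorProduct.tmul_smul, smul_smul,
        mul_comm]
  
end DQH
namespace DQH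
variable {k H : Type} [Field k] [AddCommGroup H] [Module k H]
variable {M N N' : Type} [AddCommGroup M] [Module k M] [AddCommGroup N] [Module k N]
  [AddCommGroup N'] [Module k N']

theorem ydBraiding_natural (act : H →ₗ[k] M →ₗ[k] M)
    (cN : N →ₗ[k] H ⊗[k] N) (cN' : N' →ₗ[k] H ⊗[k] N') (φ : N →ₗ[k] N')
    (hφ : cN' ∘ₗ φ = (TensorProduct.map LinearMap.id φ) ∘ₗ cN) :
    (ydBraiding act cN') ∘ₗ (TensorProduct.map φ LinearMap.id) =
      (TensorProduct.map LinearMap.id φ) ∘ₗ (ydBraiding act cN) := by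
  apply TensorProduct.ext'
  intro n m
  obtain ⟨sn, n1, n0, hn⟩ := exists_pres (k := k) (cN n)
  have hn' : cN' (φ n) = ∑ i ∈ sn, n1 i ⊗ₜ[k] φ (n0 i) := by
    have := LinearMap.congr_fun hφ n
    simp only [LinearMap.comp_apply] at this
    rw [this, hn, map_sum]
    simp
  simp only [LinearMap.comp_apply, TensorProduct.map_tmul, LinearMap.id_coe, id_eq]
  rw [ydBraiding_eq act cN' (φ n) m sn n1 (fun i => φ (n0 i)) hn',
    ydBraiding_eq act cN n m sn n1 n0 hn, map_sum]
  simp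

theorem isComodule_triv (B : DualQuasiBialgebra k H) :
    IsComodule B (TensorProduct.mk k H k B.one) := by
  constructor
  · intro c
    simp [TensorProduct.mk_apply, B.comul_one]
  · intro c
    simp [TensorProduct.mk_apply, B.counit_one]

/-- the right-weak-center object attached to a Yetter-Drinfeld module -/
def ydCenterObj (B : DualQuasiBialgebra k H) {M : Type} [AddCommGroup M] [Module k M]
    (cM : M →ₗ[k] H ⊗[k] M) (act : H →ₗ[k] M →ₗ[k] M)
    (hYD : IsYetterDrinfeld B cM act) : RightCenterObj B M cM where
  t N _ _ cN _ := ydBraiding act cN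
  natural N N' _ _ _ _ cN cN' hN hN' φ hφ := ydBraiding_natural act cN cN' φ hφ
  unit htriv m := by
    have hpres : (TensorProduct.mk k H k B.one) (1 : k) =
        ∑ i ∈ ({0} : Finset ℕ), B.one ⊗ₜ[k] (1 : k) := by simp
    rw [ydBraiding_eq act (TensorProduct.mk k H k B.one) (1 : k) m ({0} : Finset ℕ)
      (fun _ => B.one) (fun _ => (1 : k)) hpres]
    simp [hYD.one_act]
  colinear N _ _ cN hN := ydBraiding_colinear B cM act hYD cN hN
  hexagon X Y _ _ _ _ cX cY hX hY hXY := ydBraiding_hexagon B cM act hYD cX cY hX hY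

end DQH
namespace DQH
variable {k H : Type} [Field k] [AddCommGroup H] [Module k H]
variable {M N : Type} [AddCommGroup M] [Module k M] [AddCommGroup N] [Module k N]

/-- the comodule `(H, comul)` -/
def hComod (B : DualQuasiBialgebra k H) : IsComodule B B.comul :=
  ⟨B.coassoc, B.counit_left⟩

/-- the free coaction on `H ⊗ N` (coacting on the first leg only) -/
def cFree (B : DualQuasiBialgebra k H) (N : Type) [AddCommGroup N] [Module k N] :
    H ⊗[k] N →ₗ[k] H ⊗[k] (H ⊗[k] N) :=
  (TensorProduct.assoc k H H N).toLinearMap ∘ₗ (TensorProduct.map B.comul LinearMap.id)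

lemma cFree_tmul (B : DualQuasiBialgebra k H) {ι : Type} (h : H) (n : N)
    (s : Finset ι) (h1 h2 : ι → H) (hh : B.comul h = ∑ i ∈ s, h1 i ⊗ₜ[k] h2 i) :
    cFree B N (h ⊗ₜ[k] n) = ∑ i ∈ s, h1 i ⊗ₜ[k] (h2 i ⊗ₜ[k] n) := by
  simp only [cFree, LinearMap.comp_apply, TensorProduct.map_tmul, LinearMap.id_coe, id_eq, hh]
  rw [TensorProduct.sum_tmul, map_sum]
  simp

theorem isComodule_cFree (B : DualQuasiBialgebra k H) :
    IsComodule B (cFree B N) := by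
  constructor
  · intro w
    induction w using TensorProduct.induction_on with
    | zero => simp
    | add u v h1 h2 => simp only [map_add, h1, h2]
    | tmul h n =>
      obtain ⟨sh, h1, h2, hh⟩ := exists_pres (k := k) (B.comul h)
      choose sa uf vf hu using fun i => exists_pres (k := k) (B.comul (h1 i))
      choose sb wf zf hw using fun i => exists_pres (k := k) (B.comul (h2 i))
      set J : H ⊗[k] (H ⊗[k] H) →ₗ[k] H ⊗[k] (H ⊗[k] (H ⊗[k] N)) :=
        TensorProduct.map LinearMap.id
          (TensorProduct.map LinearMap.id ((TensorProduct.mk k H N).flip n)) with hJ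
      have key := congrArg J (B.coassoc h)
      have e1 : J ((TensorProduct.assoc k H H H)
          ((TensorProduct.map B.comul LinearMap.id) (B.comul h))) =
          (TensorProduct.assoc k H H (H ⊗[k] N))
            ((TensorProduct.map B.comul LinearMap.id) (cFree B N (h ⊗ₜ[k] n))) := by
        rw [cFree_tmul B h n sh h1 h2 hh, hh]
        simp only [map_sum]
        refine Finset.sum_congr rfl fun i _ => ?_
        simp only [TensorProduct.map_tmul, LinearMap.id_coe, id_eq]
        rw [hu i]
        simp only [TensorProduct.sum_tmul, map_sum]
        refine Finset.sum_congr rfl fun a _ => ?_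
        simp [hJ]
      have e2 : J ((TensorProduct.map LinearMap.id B.comul) (B.comul h)) =
          (TensorProduct.map LinearMap.id (cFree B N)) (cFree B N (h ⊗ₜ[k] n)) := by
        rw [cFree_tmul B h n sh h1 h2 hh, hh]
        simp only [map_sum]
        refine Finset.sum_congr rfl fun i _ => ?_
        simp only [TensorProduct.map_tmul, LinearMap.id_coe, id_eq]
        rw [cFree_tmul B (h2 i) n (sb i) (wf i) (zf i) (hw i), hw i]
        rw [TensorProduct.tmul_sum, TensorProduct.tmul_sum]
        simp only [map_sum]
        refine Finset.sum_congr rfl fun b _ => ?_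
        simp [hJ]
      rw [← e1, ← e2, key]
  · intro w
    induction w using TensorProduct.induction_on with
    | zero => simp
    | add u v h1 h2 => simp only [map_add, h1, h2]
    | tmul h n =>
      obtain ⟨sh, h1, h2, hh⟩ := exists_pres (k := k) (B.comul h)
      have ec : ∑ i ∈ sh, B.counit (h1 i) • h2 i = h := by
        have := B.counit_left h
        rw [hh] at this
        simpa [map_sum] using this
      rw [cFree_tmul B h n sh h1 h2 hh]
      simp only [map_sum]
      rw [← ec, TensorProduct.sum_tmul]
      refine Finset.sum_congr rfl fun i _ => ?_
      simp [TensorProduct.smul_tmul']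

end DQH
namespace DQH
variable {k H : Type} [Field k] [AddCommGroup H] [Module k H]
variable {M N : Type} [AddCommGroup M] [Module k M] [AddCommGroup N] [Module k N]

/-- the action extracted from a right-weak-center object -/
def centerAct (B : DualQuasiBialgebra k H) {M : Type} [AddCommGroup M] [Module k M]
    {cM : M →ₗ[k] H ⊗[k] M} (Z : RightCenterObj B M cM) : H →ₗ[k] M →ₗ[k] M :=
  TensorProduct.curry ((TensorProduct.rid k M).toLinearMap ∘ₗ
    (TensorProduct.map LinearMap.id B.counit) ∘ₗ Z.t H B.comul (hComod B))

lemma centerAct_apply (B : DualQuasiBialgebra k H) {M : Type} [AddCommGroup M] [Module k M]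
    {cM : M →ₗ[k] H ⊗[k] M} (Z : RightCenterObj B M cM) (h : H) (m : M) :
    centerAct B Z h m = (TensorProduct.rid k M)
      ((TensorProduct.map LinearMap.id B.counit) (Z.t H B.comul (hComod B) (h ⊗ₜ[k] m))) := by
  simp [centerAct]

theorem center_formula (B : DualQuasiBialgebra k H) {M : Type} [AddCommGroup M] [Module k M]
    {cM : M →ₗ[k] H ⊗[k] M} (Z : RightCenterObj B M cM)
    {ι : Type} (N : Type) [AddCommGroup N] [Module k N]
    (cN : N →ₗ[k] H ⊗[k] N) (hN : IsComodule B cN) (n : N) (m : M)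
    (sn : Finset ι) (n1 : ι → H) (n0 : ι → N)
    (hn : cN n = ∑ i ∈ sn, n1 i ⊗ₜ[k] n0 i) :
    Z.t N cN hN (n ⊗ₜ[k] m) = ∑ i ∈ sn, centerAct B Z (n1 i) m ⊗ₜ[k] n0 i := by
  -- naturality along φ_{n₀} : H → H⊗N and along cN : N → H⊗N
  have hcol1 : ∀ v : N, (cFree B N) ∘ₗ ((TensorProduct.mk k H N).flip v) =
      (TensorProduct.map LinearMap.id ((TensorProduct.mk k H N).flip v)) ∘ₗ B.comul := by
    intro v
    apply LinearMap.ext; intro h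
    simp only [LinearMap.comp_apply, LinearMap.flip_apply, TensorProduct.mk_apply, cFree,
      LinearEquiv.coe_coe, TensorProduct.map_tmul, LinearMap.id_coe, id_eq]
    generalize B.comul h = w
    induction w using TensorProduct.induction_on with
    | zero => simp
    | tmul a b => simp
    | add u v hu hv => simp only [TensorProduct.add_tmul, map_add, hu, hv]
  have hcol2 : (cFree B N) ∘ₗ cN = (TensorProduct.map LinearMap.id cN) ∘ₗ cN := by
    apply LinearMap.ext; intro v
    exact hN.1 v
  have nat1 := fun v : N => Z.natural H (H ⊗[k] N) B.comul (cFree B N) (hComod B)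
    (isComodule_cFree B) ((TensorProduct.mk k H N).flip v) (hcol1 v)
  have nat2 := Z.natural N (H ⊗[k] N) cN (cFree B N) hN (isComodule_cFree B) cN hcol2
  have key := LinearMap.congr_fun nat2 (n ⊗ₜ[k] m)
  simp only [LinearMap.comp_apply, TensorProduct.map_tmul, LinearMap.id_coe, id_eq] at key
  rw [hn, TensorProduct.sum_tmul, map_sum] at key
  have key2 : ∀ i, Z.t (H ⊗[k] N) (cFree B N) (isComodule_cFree B)
      ((n1 i ⊗ₜ[k] n0 i) ⊗ₜ[k] m) =
      (TensorProduct.map LinearMap.id ((TensorProduct.mk k H N).flip (n0 i)))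
        (Z.t H B.comul (hComod B) (n1 i ⊗ₜ[k] m)) := by
    intro i
    have := LinearMap.congr_fun (nat1 (n0 i)) (n1 i ⊗ₜ[k] m)
    simpa using this
  -- collapse with the counit
  set coll : H ⊗[k] N →ₗ[k] N :=
    (TensorProduct.lid k N).toLinearMap ∘ₗ (TensorProduct.map B.counit LinearMap.id)
    with hcoll
  set K : M ⊗[k] (H ⊗[k] N) →ₗ[k] M ⊗[k] N := TensorProduct.map LinearMap.id coll with hK
  have hcollcN : coll ∘ₗ cN = LinearMap.id := by
    apply LinearMap.ext; intro v
    simpa [hcoll] using hN.2 v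
  have hKid : ∀ w : M ⊗[k] N, K ((TensorProduct.map LinearMap.id cN) w) = w := by
    intro w
    rw [hK, ← LinearMap.comp_apply, ← TensorProduct.map_comp, hcollcN]
    simp [TensorProduct.map_id]
  have hKphi : ∀ (v : N) (w : M ⊗[k] H),
      K ((TensorProduct.map LinearMap.id ((TensorProduct.mk k H N).flip v)) w) =
        ((TensorProduct.rid k M) ((TensorProduct.map LinearMap.id B.counit) w)) ⊗ₜ[k] v := by
    intro v w
    induction w using TensorProduct.induction_on with
    | zero => simp
    | tmul m' h' =>
      simp only [hK, hcoll, TensorProduct.map_tmul, LinearMap.comp_apply,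
        LinearMap.flip_apply, TensorProduct.mk_apply, LinearMap.id_coe, id_eq,
        LinearEquiv.coe_coe, TensorProduct.lid_tmul, TensorProduct.rid_tmul,
        TensorProduct.tmul_smul, TensorProduct.smul_tmul']
    | add w1 w2 h1 h2 => simp only [map_add, TensorProduct.add_tmul, h1, h2]
  calc Z.t N cN hN (n ⊗ₜ[k] m)
      = K ((TensorProduct.map LinearMap.id cN) (Z.t N cN hN (n ⊗ₜ[k] m))) :=
        (hKid _).symm
    _ = K (∑ i ∈ sn, Z.t (H ⊗[k] N) (cFree B N) (isComodule_cFree B)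
          ((n1 i ⊗ₜ[k] n0 i) ⊗ₜ[k] m)) := by rw [← key]
    _ = ∑ i ∈ sn, centerAct B Z (n1 i) m ⊗ₜ[k] n0 i := by
        rw [map_sum]
        refine Finset.sum_congr rfl fun i _ => ?_
        rw [key2 i, hKphi, centerAct_apply]

end DQH
namespace DQH
variable {k H : Type} [Field k] [AddCommGroup H] [Module k H]
variable {M N : Type} [AddCommGroup M] [Module k M] [AddCommGroup N] [Module k N]

theorem center_t_eq (B : DualQuasiBialgebra k H) {M : Type} [AddCommGroup M] [Module k M]
    {cM : M →ₗ[k] H ⊗[k] M} (Z : RightCenterObj B M cM)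
    (N : Type) [AddCommGroup N] [Module k N]
    (cN : N →ₗ[k] H ⊗[k] N) (hN : IsComodule B cN) :
    Z.t N cN hN = ydBraiding (centerAct B Z) cN := by
  apply TensorProduct.ext'
  intro n m
  obtain ⟨sn, n1, n0, hn⟩ := exists_pres (k := k) (cN n)
  rw [center_formula B Z N cN hN n m sn n1 n0 hn,
    ydBraiding_eq (centerAct B Z) cN n m sn n1 n0 hn]

theorem centerAct_one (B : DualQuasiBialgebra k H) {M : Type} [AddCommGroup M] [Module k M]
    {cM : M →ₗ[k] H ⊗[k] M} (Z : RightCenterObj B M cM) (m : M) :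
    centerAct B Z B.one m = m := by
  have hu := Z.unit (isComodule_triv B) m
  have hpres : (TensorProduct.mk k H k B.one) (1 : k) =
      ∑ i ∈ ({0} : Finset ℕ), B.one ⊗ₜ[k] (1 : k) := by simp
  rw [center_formula B Z k (TensorProduct.mk k H k B.one) (isComodule_triv B) (1 : k) m
    ({0} : Finset ℕ) (fun _ => B.one) (fun _ => (1 : k)) hpres] at hu
  simp only [Finset.sum_singleton] at hu
  have := congrArg (TensorProduct.rid k M) hu
  simpa using this

theorem colinear_evalL (B : DualQuasiBialgebra k H) (cM : M →ₗ[k] H ⊗[k] M)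
    (act : H →ₗ[k] M →ₗ[k] M) (cN : N →ₗ[k] H ⊗[k] N) (n : N) (m : M) :
    coactTensor B cM cN (ydBraiding act cN (n ⊗ₜ[k] m)) =
      psiL B cM act m N (rho2 cN n) := by
  obtain ⟨sn, n1, n0, hn⟩ := exists_pres (k := k) (cN n)
  choose sc Pf Qf hP using fun i => exists_pres (k := k) (cN (n0 i))
  choose sE Af A0f hA using fun i => exists_pres (k := k) (cM (act (n1 i) m))
  have eN : rho2 cN n = ∑ i ∈ sn, ∑ c ∈ sc i, n1 i ⊗ₜ[k] (Pf i c ⊗ₜ[k] Qf i c) := by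
    rw [rho2, LinearMap.comp_apply, hn, map_sum]
    exact Finset.sum_congr rfl fun i _ => by
      rw [TensorProduct.map_tmul, hP i, TensorProduct.tmul_sum]; simp
  rw [ydBraiding_eq act cN n m sn n1 n0 hn, map_sum, eN, map_sum]
  refine Finset.sum_congr rfl fun i _ => ?_
  rw [coactTensor_eq B cM cN _ (n0 i) (sE i) (sc i) (Af i) (A0f i) (Pf i) (Qf i)
    (hA i) (hP i), map_sum]
  rw [Finset.sum_comm]
  refine Finset.sum_congr rfl fun c _ => ?_
  rw [psiL_eq B cM act m (n1 i) (Pf i c) (Qf i c) (sE i) (Af i) (A0f i) (hA i)]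

theorem colinear_evalR (B : DualQuasiBialgebra k H) (cM : M →ₗ[k] H ⊗[k] M)
    (act : H →ₗ[k] M →ₗ[k] M) (cN : N →ₗ[k] H ⊗[k] N) (n : N) (m : M) :
    (TensorProduct.map LinearMap.id (ydBraiding act cN)) (coactTensor B cN cM (n ⊗ₜ[k] m)) =
      psiR B act N (rho2 cN n ⊗ₜ[k] cM m) := by
  obtain ⟨sn, n1, n0, hn⟩ := exists_pres (k := k) (cN n)
  obtain ⟨sm, m1, m0, hm⟩ := exists_pres (k := k) (cM m)
  choose sc Pf Qf hP using fun i => exists_pres (k := k) (cN (n0 i))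
  have eN : rho2 cN n = ∑ i ∈ sn, ∑ c ∈ sc i, n1 i ⊗ₜ[k] (Pf i c ⊗ₜ[k] Qf i c) := by
    rw [rho2, LinearMap.comp_apply, hn, map_sum]
    exact Finset.sum_congr rfl fun i _ => by
      rw [TensorProduct.map_tmul, hP i, TensorProduct.tmul_sum]; simp
  rw [coactTensor_eq B cN cM n m sn sm n1 n0 m1 m0 hn hm, map_sum, eN,
    TensorProduct.sum_tmul, map_sum]
  refine Finset.sum_congr rfl fun i _ => ?_
  rw [map_sum]
  calc ∑ r ∈ sm, (TensorProduct.map LinearMap.id (ydBraiding act cN))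
        (B.mul (n1 i) (m1 r) ⊗ₜ[k] (n0 i ⊗ₜ[k] m0 r))
      = ∑ r ∈ sm, ∑ c ∈ sc i,
          B.mul (n1 i) (m1 r) ⊗ₜ[k] (act (Pf i c) (m0 r) ⊗ₜ[k] Qf i c) := by
        refine Finset.sum_congr rfl fun r _ => ?_
        rw [TensorProduct.map_tmul,
          ydBraiding_eq act cN (n0 i) (m0 r) (sc i) (Pf i) (Qf i) (hP i),
          TensorProduct.tmul_sum]
        simp
    _ = ∑ c ∈ sc i, ∑ r ∈ sm,
          B.mul (n1 i) (m1 r) ⊗ₜ[k] (act (Pf i c) (m0 r) ⊗ₜ[k] Qf i c) :=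
        Finset.sum_comm
    _ = ∑ c ∈ sc i, psiR B act N ((n1 i ⊗ₜ[k] (Pf i c ⊗ₜ[k] Qf i c)) ⊗ₜ[k] cM m) := by
        refine Finset.sum_congr rfl fun c _ => ?_
        rw [psiR_eq B act m (n1 i) (Pf i c) (Qf i c) cM sm m1 m0 hm]
    _ = psiR B act N ((∑ c ∈ sc i, n1 i ⊗ₜ[k] (Pf i c ⊗ₜ[k] Qf i c)) ⊗ₜ[k] cM m) := by
        rw [TensorProduct.sum_tmul, map_sum]

end DQH
namespace DQH
variable {k H : Type} [Field k] [AddCommGroup H] [Module k H]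
variable {M : Type} [AddCommGroup M] [Module k M]

theorem center_yd3 (B : DualQuasiBialgebra k H) {cM : M →ₗ[k] H ⊗[k] M}
    (Z : RightCenterObj B M cM) (h : H) (m : M)
    (sh sm : Finset ℕ) (h1 h2 m1 : ℕ → H) (m0 : ℕ → M)
    (hh : B.comul h = ∑ i ∈ sh, h1 i ⊗ₜ[k] h2 i)
    (hm : cM m = ∑ j ∈ sm, m1 j ⊗ₜ[k] m0 j) :
    ∑ i ∈ sh, ∑ j ∈ sm, B.mul (h1 i) (m1 j) ⊗ₜ[k] centerAct B Z (h2 i) (m0 j) =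
      ∑ i ∈ sh, (TensorProduct.map (B.mul.flip (h2 i)) LinearMap.id)
        (cM (centerAct B Z (h1 i) m)) := by
  set act := centerAct B Z with hact
  have colin := Z.colinear H B.comul (hComod B)
  rw [center_t_eq B Z H B.comul (hComod B)] at colin
  have ev := LinearMap.congr_fun colin (h ⊗ₜ[k] m)
  simp only [LinearMap.comp_apply] at ev
  rw [colinear_evalL B cM act B.comul h m, colinear_evalR B cM act B.comul h m] at ev
  choose sa uf vf hu using fun i => exists_pres (k := k) (B.comul (h2 i))
  have eρ : rho2 B.comul h = ∑ i ∈ sh, ∑ a ∈ sa i, h1 i ⊗ₜ[k] (uf i a ⊗ₜ[k] vf i a) := by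
    rw [rho2, LinearMap.comp_apply, hh, map_sum]
    exact Finset.sum_congr rfl fun i _ => by
      rw [TensorProduct.map_tmul, hu i, TensorProduct.tmul_sum]; simp
  set κ : H ⊗[k] (M ⊗[k] H) →ₗ[k] H ⊗[k] M := TensorProduct.map LinearMap.id
    ((TensorProduct.rid k M).toLinearMap ∘ₗ (TensorProduct.map LinearMap.id B.counit))
    with hκdef
  have hκ : ∀ (v : H) (w : H ⊗[k] M),
      κ ((TensorProduct.map LinearMap.id ((TensorProduct.mk k M H).flip v)) w) =
        B.counit v • w := by
    intro v w
    induction w using TensorProduct.induction_on with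
    | zero => simp
    | tmul h' m' =>
      simp only [hκdef, TensorProduct.map_tmul, LinearMap.id_coe, id_eq,
        LinearMap.flip_apply, TensorProduct.mk_apply, LinearMap.comp_apply,
        LinearEquiv.coe_coe, TensorProduct.rid_tmul, TensorProduct.tmul_smul]
    | add w1 w2 e1 e2 => simp only [map_add, e1, e2, smul_add]
  have ecnt : ∀ i, ∑ a ∈ sa i, B.counit (vf i a) • uf i a = h2 i := by
    intro i
    have := B.counit_right (h2 i)
    rw [hu i] at this
    simpa [map_sum] using this
  have cL : κ (psiL B cM act m H (rho2 B.comul h)) = psiL' B cM act m (B.comul h) := by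
    rw [eρ]
    simp only [map_sum]
    calc ∑ i ∈ sh, ∑ a ∈ sa i, κ (psiL B cM act m H (h1 i ⊗ₜ[k] (uf i a ⊗ₜ[k] vf i a)))
        = ∑ i ∈ sh, psiL' B cM act m (h1 i ⊗ₜ[k] h2 i) := by
          refine Finset.sum_congr rfl fun i _ => ?_
          calc ∑ a ∈ sa i, κ (psiL B cM act m H (h1 i ⊗ₜ[k] (uf i a ⊗ₜ[k] vf i a)))
              = ∑ a ∈ sa i, B.counit (vf i a) • psiL' B cM act m (h1 i ⊗ₜ[k] uf i a) := by
                refine Finset.sum_congr rfl fun a _ => ?_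
                rw [psiL_apply, hκ]
            _ = psiL' B cM act m (h1 i ⊗ₜ[k] (∑ a ∈ sa i, B.counit (vf i a) • uf i a)) := by
                rw [TensorProduct.tmul_sum, map_sum]
                exact Finset.sum_congr rfl fun a _ => by
                  rw [TensorProduct.tmul_smul, map_smul]
            _ = psiL' B cM act m (h1 i ⊗ₜ[k] h2 i) := by rw [ecnt i]
      _ = psiL' B cM act m (B.comul h) := by rw [hh, map_sum]
  have cR : κ (psiR B act H (rho2 B.comul h ⊗ₜ[k] cM m)) =
      psiR' B act (B.comul h ⊗ₜ[k] cM m) := by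
    rw [eρ]
    rw [TensorProduct.sum_tmul, map_sum, map_sum]
    calc ∑ i ∈ sh, κ (psiR B act H ((∑ a ∈ sa i, h1 i ⊗ₜ[k] (uf i a ⊗ₜ[k] vf i a))
          ⊗ₜ[k] cM m))
        = ∑ i ∈ sh, psiR' B act ((h1 i ⊗ₜ[k] h2 i) ⊗ₜ[k] cM m) := by
          refine Finset.sum_congr rfl fun i _ => ?_
          rw [TensorProduct.sum_tmul, map_sum, map_sum]
          calc ∑ a ∈ sa i, κ (psiR B act H ((h1 i ⊗ₜ[k] (uf i a ⊗ₜ[k] vf i a)) ⊗ₜ[k] cM m))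
              = ∑ a ∈ sa i, B.counit (vf i a) •
                  psiR' B act ((h1 i ⊗ₜ[k] uf i a) ⊗ₜ[k] cM m) := by
                refine Finset.sum_congr rfl fun a _ => ?_
                rw [psiR_apply, hκ]
            _ = psiR' B act ((h1 i ⊗ₜ[k] (∑ a ∈ sa i, B.counit (vf i a) • uf i a))
                  ⊗ₜ[k] cM m) := by
                rw [TensorProduct.tmul_sum, TensorProduct.sum_tmul, map_sum]
                exact Finset.sum_congr rfl fun a _ => by
                  rw [TensorProduct.tmul_smul, ← TensorProduct.smul_tmul', map_smul]
            _ = psiR' B act ((h1 i ⊗ₜ[k] h2 i) ⊗ₜ[k] cM m) := by rw [ecnt i]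
      _ = psiR' B act (B.comul h ⊗ₜ[k] cM m) := by rw [hh, TensorProduct.sum_tmul, map_sum]
  rw [yd3L_pres B cM act h m sh h1 h2 hh sm m1 m0 hm, yd3R_pres B cM act h m sh h1 h2 hh]
  rw [← cR, ← ev, cL]

end DQH
namespace DQH
variable {k H : Type} [Field k] [AddCommGroup H] [Module k H]
variable {M : Type} [AddCommGroup M] [Module k M]

theorem center_yd1 (B : DualQuasiBialgebra k H) {cM : M →ₗ[k] H ⊗[k] M}
    (hcM : IsComodule B cM) (Z : RightCenterObj B M cM) (h g : H) (m : M)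
    (sh3 sg3 sh sg sm : Finset ℕ)
    (h1 h2 h3 g1 g2 g3 h1' h2' g1' g2' m1 : ℕ → H) (m0 : ℕ → M)
    (hh3 : cD3 B.comul h = ∑ i ∈ sh3, h1 i ⊗ₜ[k] (h2 i ⊗ₜ[k] h3 i))
    (hg3 : cD3 B.comul g = ∑ j ∈ sg3, g1 j ⊗ₜ[k] (g2 j ⊗ₜ[k] g3 j))
    (hh : B.comul h = ∑ i ∈ sh, h1' i ⊗ₜ[k] h2' i)
    (hg : B.comul g = ∑ j ∈ sg, g1' j ⊗ₜ[k] g2' j)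
    (hm : cM m = ∑ r ∈ sm, m1 r ⊗ₜ[k] m0 r) :
    ∑ i ∈ sh3, ∑ j ∈ sg3, ∑ r ∈ sm,
        B.sigma (h1 i) (g1 j) (m1 r) •
          cweight cM ((B.sigma.flip (h3 i)).flip (g3 j))
            (centerAct B Z (B.mul (h2 i) (g2 j)) (m0 r)) =
      ∑ i ∈ sh, ∑ j ∈ sg,
        centerAct B Z (h2' i)
          (cweight cM ((B.sigma (h1' i)).flip (g2' j)) (centerAct B Z (g1' j) m)) := by
  set act := centerAct B Z with hactdef
  have hHH := isComodule_coactTensor B B.comul B.comul (hComod B) (hComod B)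
  have hex := Z.hexagon H H B.comul B.comul (hComod B) (hComod B) hHH
  rw [center_t_eq B Z (H ⊗[k] H) (coactTensor B B.comul B.comul) hHH,
    center_t_eq B Z H B.comul (hComod B)] at hex
  have ev := LinearMap.congr_fun hex (h ⊗ₜ[k] (g ⊗ₜ[k] m))
  simp only [LinearMap.comp_apply] at ev
  rw [evalL B cM act B.comul B.comul (hComod B) (hComod B) h g m sh h1' h2' hh
      sg g1' g2' hg,
    Omega_rho3 B cM act B.comul B.comul (hComod B) (hComod B) h g m sh h1' h2' hh
      sg g1' g2' hg,
    evalR B cM act B.comul B.comul (hComod B) (hComod B) h g m sh h1' h2' hh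
      sg g1' g2' hg,
    OmegaR_rho2 B cM act B.comul B.comul (hComod B) (hComod B) h g m sh h1' h2' hh
      sg g1' g2' hg] at ev
  -- counit collapse
  set χ : (M ⊗[k] H) ⊗[k] H →ₗ[k] M :=
    (TensorProduct.rid k M).toLinearMap ∘ₗ
      (TensorProduct.map ((TensorProduct.rid k M).toLinearMap ∘ₗ
        (TensorProduct.map LinearMap.id B.counit)) B.counit) with hχdef
  have hχ : ∀ (w : M) (a b : H), χ ((w ⊗ₜ[k] a) ⊗ₜ[k] b) =
      (B.counit a * B.counit b) • w := by
    intro w a b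
    simp [hχdef, smul_smul, mul_comm]
  have ech : ∑ i ∈ sh, B.counit (h2' i) • h1' i = h := by
    have := B.counit_right h
    rw [hh] at this
    simpa [map_sum] using this
  have ecg : ∑ j ∈ sg, B.counit (g2' j) • g1' j = g := by
    have := B.counit_right g
    rw [hg] at this
    simpa [map_sum] using this
  have ch3 : ∑ i ∈ sh, B.counit (h2' i) • cD3 B.comul (h1' i) = cD3 B.comul h := by
    rw [← ech]
    simp [cD3, map_sum, map_smul]
  have cg3 : ∑ j ∈ sg, B.counit (g2' j) • cD3 B.comul (g1' j) = cD3 B.comul g := by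
    rw [← ecg]
    simp [cD3, map_sum, map_smul]
  have ch2 : ∑ i ∈ sh, B.counit (h2' i) • B.comul (h1' i) = B.comul h := by
    rw [← ech]
    simp [map_sum, map_smul]
  have cg2 : ∑ j ∈ sg, B.counit (g2' j) • B.comul (g1' j) = B.comul g := by
    rw [← ecg]
    simp [map_sum, map_smul]
  have ev2 := congrArg χ ev
  simp only [map_sum] at ev2
  have cL : ∑ i ∈ sh, ∑ j ∈ sg,
      χ (((lamL B cM act (cD3 B.comul (h1' i) ⊗ₜ[k] (cD3 B.comul (g1' j) ⊗ₜ[k] cM m)))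
        ⊗ₜ[k] h2' i) ⊗ₜ[k] g2' j) =
      lamL B cM act (cD3 B.comul h ⊗ₜ[k] (cD3 B.comul g ⊗ₜ[k] cM m)) := by
    rw [← ch3, ← cg3]
    rw [TensorProduct.sum_tmul, map_sum]
    refine Finset.sum_congr rfl fun i _ => ?_
    rw [← TensorProduct.smul_tmul', map_smul, TensorProduct.sum_tmul,
      TensorProduct.tmul_sum, map_sum, Finset.smul_sum]
    refine Finset.sum_congr rfl fun j _ => ?_
    rw [hχ, ← TensorProduct.smul_tmul', TensorProduct.tmul_smul, map_smul, smul_smul]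
  have cR : ∑ i ∈ sh, ∑ j ∈ sg,
      χ (((lamR B cM act (B.comul (h1' i) ⊗ₜ[k] (B.comul (g1' j) ⊗ₜ[k] m)))
        ⊗ₜ[k] h2' i) ⊗ₜ[k] g2' j) =
      lamR B cM act (B.comul h ⊗ₜ[k] (B.comul g ⊗ₜ[k] m)) := by
    rw [← ch2, ← cg2]
    rw [TensorProduct.sum_tmul, map_sum]
    refine Finset.sum_congr rfl fun i _ => ?_
    rw [← TensorProduct.smul_tmul', map_smul, TensorProduct.sum_tmul,
      TensorProduct.tmul_sum, map_sum, Finset.smul_sum]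
    refine Finset.sum_congr rfl fun j _ => ?_
    rw [hχ, ← TensorProduct.smul_tmul', TensorProduct.tmul_smul, map_smul, smul_smul]
  rw [← lamL_pres B cM act h g m sh3 sg3 sm h1 h2 h3 g1 g2 g3 m1 m0 hh3 hg3 hm,
    ← lamR_pres B cM act h g m sh sg h1' h2' g1' g2' hh hg]
  rw [← cL, ← cR]
  exact ev2

end DQH
open DQH in
/-- Proposition 2.7: for a dual quasi-bialgebra `H`, the category of left-left
Yetter-Drinfeld modules is isomorphic to the right weak center of the monoidal category of
left `H`-comodules.  At the level of structures on a fixed comodule `(M, cM)`: every right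
weak center object gives a Yetter-Drinfeld action `h·m = (id⊗ε)c_{H,M}(h⊗m)` whose induced
half-braiding is `c_{N,M}(n⊗m) = n₍₋₁₎·m ⊗ n₍₀₎`, and conversely every Yetter-Drinfeld
action arises this way. -/
theorem yd_iff_right_center {k H : Type} [Field k] [AddCommGroup H] [Module k H]
    (B : DualQuasiBialgebra k H)
    {M : Type} [AddCommGroup M] [Module k M]
    (cM : M →ₗ[k] H ⊗[k] M) (hcM : IsComodule B cM) :
    (∀ Z : RightCenterObj B M cM,
      ∃ act : H →ₗ[k] M →ₗ[k] M,
        (∀ h m, act h m =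
          (TensorProduct.rid k M)
            ((TensorProduct.map LinearMap.id B.counit)
              (Z.t H B.comul ⟨B.coassoc, B.counit_left⟩ (h ⊗ₜ[k] m)))) ∧
        IsYetterDrinfeld B cM act ∧
        (∀ (N : Type) [AddCommGroup N] [Module k N]
            (cN : N →ₗ[k] H ⊗[k] N) (hN : IsComodule B cN)
            (n : N) (m : M) (sn : Finset ℕ) (n1 : ℕ → H) (n0 : ℕ → N),
          cN n = ∑ i ∈ sn, n1 i ⊗ₜ[k] n0 i →
          Z.t N cN hN (n ⊗ₜ[k] m) = ∑ i ∈ sn, act (n1 i) m ⊗ₜ[k] n0 i)) ∧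
    (∀ act : H →ₗ[k] M →ₗ[k] M, IsYetterDrinfeld B cM act →
      ∃ Z : RightCenterObj B M cM,
        ∀ (N : Type) [AddCommGroup N] [Module k N]
            (cN : N →ₗ[k] H ⊗[k] N) (hN : IsComodule B cN)
            (n : N) (m : M) (sn : Finset ℕ) (n1 : ℕ → H) (n0 : ℕ → N),
          cN n = ∑ i ∈ sn, n1 i ⊗ₜ[k] n0 i →
          Z.t N cN hN (n ⊗ₜ[k] m) = ∑ i ∈ sn, act (n1 i) m ⊗ₜ[k] n0 i) := by
  constructor
  · intro Z
    refine ⟨centerAct B Z, fun h m => centerAct_apply B Z h m, ?_, ?_⟩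
    · exact
        { comodule := hcM
          one_act := centerAct_one B Z
          yd1 := fun h g m sh3 sg3 sh sg sm h1 h2 h3 g1 g2 g3 h1' h2' g1' g2' m1 m0
              hh3 hg3 hh hg hm =>
            center_yd1 B hcM Z h g m sh3 sg3 sh sg sm h1 h2 h3 g1 g2 g3 h1' h2' g1' g2'
              m1 m0 hh3 hg3 hh hg hm
          yd3 := fun h m sh sm h1 h2 m1 m0 hh hm =>
            center_yd3 B Z h m sh sm h1 h2 m1 m0 hh hm }
    · intro N _ _ cN hN n m sn n1 n0 hn
      exact center_formula B Z N cN hN n m sn n1 n0 hn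
  · intro act hYD
    exact ⟨ydCenterObj B cM act hYD,
      fun N _ _ cN hN n m sn n1 n0 hn => ydBraiding_eq act cN n m sn n1 n0 hn⟩
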